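/- arXiv:2202.11398 — 4 statements merged into one kernel-verified Lean document; each statement's English description precedes it below -/
import Mathlib

section
/- Let S be a subset of Dic(A,y) with 1 ∉ S and S⁻¹ = S, and write S = S₁ ∪ xS₂ with S₁, S₂ ⊆ A. Then the Cayley graph Cay(Dic(A,y), S) is integral if and only if both of the following hold: (1) S₁ ∈ B(A); (2) for every one-dimensional representation π : A → ℂ* with A² ⊄ ker(π), there exists α ∈ ℤ such that π(S₂)·π(S₂⁻¹) = α². -/
open scoped Classical Pointwise

/-- The generalized dicyclic group `Dic(A, y)` where `y : A` satisfies `y * y = 1`.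
The element `⟨t, a⟩` represents `x^t * a`, where `x` is the extra generator with
`x ^ 2 = y` and `x * a * x⁻¹ = a⁻¹` for all `a ∈ A`. -/
@[ext]
structure Dic (A : Type*) [CommGroup A] (y : A) (hy : y * y = 1) where
  t : Bool
  a : A

namespace Dic

variable {A : Type*} [CommGroup A] {y : A} {hy : y * y = 1}

instance : Mul (Dic A y hy) :=
  ⟨fun g h => ⟨xor g.t h.t, (if h.t then g.a⁻¹ else g.a) * h.a * (if g.t && h.t then y else 1)⟩⟩

instance : One (Dic A y hy) := ⟨⟨false, 1⟩⟩

instance : Inv (Dic A y hy) := ⟨fun g => ⟨g.t, if g.t then y * g.a else g.a⁻¹⟩⟩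

@[simp] lemma mul_t (g h : Dic A y hy) : (g * h).t = xor g.t h.t := rfl
@[simp] lemma mul_a (g h : Dic A y hy) :
    (g * h).a = (if h.t then g.a⁻¹ else g.a) * h.a * (if g.t && h.t then y else 1) := rfl
@[simp] lemma one_t : (1 : Dic A y hy).t = false := rfl
@[simp] lemma one_a : (1 : Dic A y hy).a = 1 := rfl
@[simp] lemma inv_t (g : Dic A y hy) : g⁻¹.t = g.t := rfl
@[simp] lemma inv_a (g : Dic A y hy) : g⁻¹.a = if g.t then y * g.a else g.a⁻¹ := rfl

instance : Group (Dic A y hy) where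
  mul_assoc g₁ g₂ g₃ := by
    have hyi : y⁻¹ = y := inv_eq_of_mul_eq_one_right hy
    ext
    · cases g₁.t <;> cases g₂.t <;> cases g₃.t <;> simp
    · cases h₁ : g₁.t <;> cases h₂ : g₂.t <;> cases h₃ : g₃.t <;>
        simp [h₁, h₂, h₃, hyi, mul_inv_rev, mul_comm, mul_assoc, mul_left_comm]
  one_mul g := by ext <;> simp
  mul_one g := by ext <;> simp
  inv_mul_cancel g := by
    ext
    · simp
    · cases h : g.t <;> simp [h, mul_inv_rev, mul_comm, mul_assoc, mul_left_comm]

/-- The canonical embedding of `A` into `Dic A y hy`. -/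
def ofA (a : A) : Dic A y hy := ⟨false, a⟩

/-- The extra generator `x` of `Dic A y hy`, satisfying `x ^ 2 = y`. -/
def x (A : Type*) [CommGroup A] (y : A) (hy : y * y = 1) : Dic A y hy := ⟨true, 1⟩

instance [Fintype A] : Fintype (Dic A y hy) :=
  Fintype.ofEquiv (Bool × A)
    { toFun := fun p => ⟨p.1, p.2⟩
      invFun := fun g => (g.t, g.a)
      left_inv := fun _ => rfl
      right_inv := fun _ => rfl }

end Dic

/-- The Cayley graph of a group `G` with respect to a connection set `S`.  When `1 ∉ S` and
`S⁻¹ = S`, two vertices `g h` are adjacent if and only if `g⁻¹ * h ∈ S`. -/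
def cayley {G : Type*} [Group G] (S : Set G) : SimpleGraph G :=
  SimpleGraph.fromRel fun g h => g⁻¹ * h ∈ S

/-- A graph on a finite vertex set is integral if all eigenvalues of its adjacency matrix
are integers. -/
noncomputable def IsIntegralGraph {V : Type*} [Fintype V] (Γ : SimpleGraph V) : Prop :=
  ∀ μ ∈ spectrum ℝ (Γ.adjMatrix ℝ), ∃ k : ℤ, (k : ℝ) = μ

/-- The distance matrix of a graph on a finite vertex set. -/
noncomputable def distMatrix {V : Type*} [Fintype V] (Γ : SimpleGraph V) : Matrix V V ℝ :=
  Matrix.of fun v w => (Γ.dist v w : ℝ)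

/-- A (connected) graph on a finite vertex set is distance integral if all eigenvalues of its
distance matrix are integers. -/
noncomputable def IsDistanceIntegral {V : Type*} [Fintype V] (Γ : SimpleGraph V) : Prop :=
  ∀ μ ∈ spectrum ℝ (distMatrix Γ), ∃ k : ℤ, (k : ℝ) = μ

/-- The Boolean algebra `B(A)` of a group `A`: the collection of subsets of `A` generated by
the subgroups of `A` under finite intersections, unions, and complements. -/
inductive InBoolAlg (A : Type*) [Group A] : Set A → Prop
  | subgroup (H : Subgroup A) : InBoolAlg A (H : Set A)
  | compl {s : Set A} : InBoolAlg A s → InBoolAlg A sᶜ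
  | union {s t : Set A} : InBoolAlg A s → InBoolAlg A t → InBoolAlg A (s ∪ t)
  | inter {s t : Set A} : InBoolAlg A s → InBoolAlg A t → InBoolAlg A (s ∩ t)

/-- `mulPow S n = S^(n)`, the set of products of `n` elements of `S` (`S^(0) = {1}`). -/
def mulPow {G : Type*} [Monoid G] (S : Set G) (n : ℕ) : Set G :=
  {g | ∃ l : List G, l.length = n ∧ (∀ u ∈ l, u ∈ S) ∧ l.prod = g}

/-- `wordLen S g = ℓ_S(g)`: `0` if `g = 1`, and otherwise the least `n ≥ 1` such that `g` is a
product of `n` elements of `S`. -/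
noncomputable def wordLen {G : Type*} [Group G] (S : Set G) (g : G) : ℕ :=
  if g = 1 then 0 else sInf {n : ℕ | g ∈ mulPow S n}

/-- The distance power `Γ^D`: two distinct vertices are adjacent iff their distance in `Γ`
belongs to `D`. -/
def distPower {V : Type*} (Γ : SimpleGraph V) (D : Finset ℕ) : SimpleGraph V where
  Adj v w := v ≠ w ∧ Γ.dist v w ∈ D
  symm := ⟨fun v w h => ⟨h.1.symm, by rw [SimpleGraph.dist_comm]; exact h.2⟩⟩
  loopless := ⟨fun v h => h.1 rfl⟩

/-- A multiset `(A, f)` lies in `C(A)` iff `f` is constant on each atom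
`[a] = {b : ⟨b⟩ = ⟨a⟩}`. -/
def InCA {A : Type*} [Group A] (f : A → ℕ) : Prop :=
  ∀ a b : A, Subgroup.zpowers a = Subgroup.zpowers b → f a = f b

/-- The two-dimensional representation `R_π` of `Dic A y hy` induced by a one-dimensional
representation `π` of `A`:  `R_π(x) = [[0, π y], [1, 0]]` and `R_π(a) = diag(π a, π a⁻¹)`. -/
noncomputable def Rpi {A : Type*} [CommGroup A] {y : A} {hy : y * y = 1}
    (π : A →* ℂ) (g : Dic A y hy) : Matrix (Fin 2) (Fin 2) ℂ :=
  (if g.t then !![0, π y; 1, 0] else 1) * !![π g.a, 0; 0, π g.a⁻¹]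

/-- The complex-conjugate of a one-dimensional representation. -/
def conjHom {A : Type*} [CommGroup A] (π : A →* ℂ) : A →* ℂ :=
  (starRingEnd ℂ).toMonoidHom.comp π


/-! ### Auxiliary lemmas -/
section Chars
variable {A : Type*} [CommGroup A] [Fintype A]

lemma char_pow_eq_one (π : A →* ℂ) (a : A) : π a ^ Fintype.card A = 1 := by
  rw [← map_pow, pow_card_eq_one, map_one]

lemma char_norm_one (π : A →* ℂ) (a : A) : ‖π a‖ = 1 :=
  Complex.norm_eq_one_of_pow_eq_one (char_pow_eq_one π a) Fintype.card_ne_zero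

lemma char_inv (π : A →* ℂ) (a : A) : π a⁻¹ = (starRingEnd ℂ) (π a) := by
  have h1 : π a * π a⁻¹ = 1 := by rw [← map_mul, mul_inv_cancel, map_one]
  have : π a⁻¹ = (π a)⁻¹ := eq_inv_of_mul_eq_one_right (by rw [← map_mul, mul_inv_cancel, map_one])
  rw [this, Complex.inv_eq_conj (char_norm_one π a)]

lemma char_isIntegral (π : A →* ℂ) (a : A) : IsIntegral ℤ (π a) := by
  refine ⟨Polynomial.X ^ Fintype.card A - 1, Polynomial.monic_X_pow_sub_C 1 Fintype.card_ne_zero, ?_⟩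
  simp [char_pow_eq_one π a]

lemma char_exists_ne_one {a : A} (ha : a ≠ 1) : ∃ π : A →* ℂ, π a ≠ 1 := by
  have : NeZero ((Monoid.exponent A : ℂ)) :=
    ⟨by exact_mod_cast (Monoid.exponent_ne_zero_of_finite (G := A))⟩
  obtain ⟨φ, hφ⟩ := CommGroup.exists_apply_ne_one_of_hasEnoughRootsOfUnity A ℂ ha
  exact ⟨(Units.coeHom ℂ).comp φ, fun h => hφ (Units.ext h)⟩

end Chars

lemma delta_mem_subalgebra {V : Type*} [Fintype V] (B : Subalgebra ℂ (V → ℂ))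
    (hsep : ∀ a b : V, a ≠ b → ∃ f ∈ B, f a ≠ f b) (a₀ : V) :
    (fun a => if a = a₀ then (1:ℂ) else 0) ∈ B := by
  have h : ∀ b : V, b ≠ a₀ → ∃ f ∈ B, f a₀ ≠ f b := fun b hb => hsep a₀ b (Ne.symm hb)
  choose f hfB hfne using h
  set t := (Finset.univ : Finset V).erase a₀ with ht
  have hmem : ∀ b (hb : b ∈ t), b ≠ a₀ := fun b hb => Finset.ne_of_mem_erase hb
  set F : V → (V → ℂ) := fun b =>
    if hb : b ≠ a₀ then
      (f b hb - fun _ => f b hb b) * fun _ => (f b hb a₀ - f b hb b)⁻¹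
    else 1 with hF
  have hFB : ∀ b, F b ∈ B := by
    intro b
    by_cases hb : b ≠ a₀
    · simp only [hF, dif_pos hb]
      exact mul_mem (sub_mem (hfB b hb) (B.algebraMap_mem (f b hb b)))
        (B.algebraMap_mem (f b hb a₀ - f b hb b)⁻¹)
    · simp only [hF, dif_neg hb]; exact one_mem B
  have key : (fun a => if a = a₀ then (1:ℂ) else 0) = ∏ b ∈ t, F b := by
    funext a
    rw [Finset.prod_apply]
    by_cases ha : a = a₀
    · subst ha
      rw [if_pos rfl]
      refine (Finset.prod_eq_one ?_).symm
      intro b hb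
      have hb' := hmem b hb
      simp only [hF, dif_pos hb', Pi.mul_apply, Pi.sub_apply]
      exact mul_inv_cancel₀ (sub_ne_zero.mpr (hfne b hb'))
    · rw [if_neg ha]
      refine (Finset.prod_eq_zero (Finset.mem_erase.mpr ⟨ha, Finset.mem_univ a⟩) ?_).symm
      simp only [hF, dif_pos ha, Pi.mul_apply, Pi.sub_apply, sub_self, zero_mul]
  rw [key]
  exact Subalgebra.prod_mem B (fun b _ => hFB b)
section CharSet
variable {A : Type*} [CommGroup A] [Fintype A]



def charSet (A : Type*) [CommGroup A] : Set (A → ℂ) := Set.range (fun π : A →* ℂ => (π : A → ℂ))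

lemma charSet_sep (a b : A) (hab : a ≠ b) : ∃ f ∈ charSet A, f a ≠ f b := by
  obtain ⟨π, hπ⟩ := char_exists_ne_one (a := a * b⁻¹) (by
    intro h; exact hab (by rwa [mul_inv_eq_one] at h))
  refine ⟨π, ⟨π, rfl⟩, fun h => hπ ?_⟩
  have hb : π b ≠ 0 := by
    intro h0
    have h1 : π b * π b⁻¹ = 1 := by rw [← map_mul, mul_inv_cancel, map_one]
    rw [h0, zero_mul] at h1; exact one_ne_zero h1.symm
  have h2 : π (a * b⁻¹) * π b = π b := by
    rw [← map_mul, inv_mul_cancel_right]; exact h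
  exact mul_right_cancel₀ hb (h2.trans (one_mul (π b)).symm)

lemma span_charSet_top : Submodule.span ℂ (charSet A) = ⊤ := by
  -- adjoin = span since charSet is a submonoid
  have hsub : ∀ g, g ∈ Algebra.adjoin ℂ (charSet A) → g ∈ Submodule.span ℂ (charSet A) := by
    intro g hg
    rw [← Subalgebra.mem_toSubmodule, Algebra.adjoin_eq_span] at hg
    have hcl : (Submonoid.closure (charSet A) : Set (A → ℂ)) ⊆ charSet A := by
      intro h hh
      induction hh using Submonoid.closure_induction with
      | mem x hx => exact hx
      | one => exact ⟨1, rfl⟩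
      | mul x y _ _ hx hy =>
          obtain ⟨π, rfl⟩ := hx; obtain ⟨π', rfl⟩ := hy
          exact ⟨π * π', rfl⟩
    exact Submodule.span_mono hcl hg
  rw [eq_top_iff]
  intro g _
  have hδ : ∀ a₀ : A, (fun a => if a = a₀ then (1:ℂ) else 0) ∈ Submodule.span ℂ (charSet A) :=
    fun a₀ => hsub _ (delta_mem_subalgebra _ (fun a b hab => by
      obtain ⟨f, hf, hne⟩ := charSet_sep a b hab
      exact ⟨f, Algebra.subset_adjoin hf, hne⟩) a₀)

  have : g = ∑ a₀ : A, g a₀ • (fun a => if a = a₀ then (1:ℂ) else 0) := by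
    funext a
    rw [Finset.sum_apply]
    simp [Pi.smul_apply]
  rw [this]
  exact Submodule.sum_mem _ (fun a₀ _ => Submodule.smul_mem _ _ (hδ a₀))

lemma span_char_range_top (A : Type*) [CommGroup A] [Fintype A] :
    Submodule.span ℂ (Set.range (fun π : A →* ℂ => (π : A → ℂ))) = ⊤ := span_charSet_top
end CharSet
section Fourier
variable {A : Type*} [CommGroup A] [Fintype A]


/-- Fourier uniqueness for sets. -/
lemma set_eq_of_char_sums {T T' : Set A}
    (h : ∀ π : A →* ℂ, ∑ a ∈ T.toFinset, π a = ∑ a ∈ T'.toFinset, π a) : T = T' := by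
  have mkL : ∀ T : Set A, ∃ L : (A → ℂ) →ₗ[ℂ] ℂ, ∀ g, L g = ∑ a ∈ T.toFinset, g a := by
    intro T
    refine ⟨{ toFun := fun g => ∑ a ∈ T.toFinset, g a, map_add' := ?_, map_smul' := ?_ }, fun _ => rfl⟩
    · intro f g; simp [Finset.sum_add_distrib]
    · intro c f; simp [Finset.mul_sum]
  obtain ⟨L1, hL1⟩ := mkL T
  obtain ⟨L2, hL2⟩ := mkL T'
  have hLeq : L1 = L2 := by
    apply LinearMap.ext_on (span_char_range_top A)
    rintro f ⟨π, rfl⟩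
    rw [hL1, hL2]; exact h π
  ext a₀
  have := congrFun (congrArg DFunLike.coe hLeq) (fun a => if a = a₀ then (1:ℂ) else 0)
  rw [hL1, hL2, Finset.sum_ite_eq' _ a₀ (fun _ => (1:ℂ)), Finset.sum_ite_eq' _ a₀ (fun _ => (1:ℂ))] at this
  simp only [Set.mem_toFinset] at this
  by_cases h1 : a₀ ∈ T <;> by_cases h2 : a₀ ∈ T' <;> simp_all

/-- Galois-free power invariance via cyclotomic polynomials. -/
lemma char_sum_pow_eq {T : Set A}
    (h : ∀ π : A →* ℂ, ∃ z : ℤ, ∑ a ∈ T.toFinset, π a = (z : ℂ))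
    {k : ℕ} (hk : (Nat.gcd k (Fintype.card A)) = 1) (π : A →* ℂ) :
    ∑ a ∈ T.toFinset, π (a ^ k) = ∑ a ∈ T.toFinset, π a := by
  set n := Fintype.card A with hn
  have hn0 : n ≠ 0 := Fintype.card_ne_zero
  haveI : NeZero n := ⟨hn0⟩
  set ζ := Complex.exp (2 * Real.pi * Complex.I / n) with hζdef
  have hζ : IsPrimitiveRoot ζ n := Complex.isPrimitiveRoot_exp n hn0
  -- choose exponents
  have he : ∀ a : A, ∃ i : ℕ, ζ ^ i = π a := by
    intro a
    obtain ⟨i, _, hi⟩ := hζ.eq_pow_of_pow_eq_one (ξ := π a) (by rw [← map_pow, pow_card_eq_one, map_one])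
    exact ⟨i, hi⟩
  choose e he using he
  obtain ⟨z, hz⟩ := h π
  set f : Polynomial ℚ := (∑ a ∈ T.toFinset, Polynomial.X ^ (e a)) - Polynomial.C (z : ℚ) with hf
  have hfζ : Polynomial.aeval ζ f = 0 := by
    simp only [hf, map_sub, map_sum, map_pow, Polynomial.aeval_X, Polynomial.aeval_C]
    simp only [he]
    rw [hz, map_intCast, sub_self]
  have hdvd : minpoly ℚ ζ ∣ f := minpoly.dvd ℚ ζ hfζ
  have hmin : Polynomial.cyclotomic n ℚ = minpoly ℚ ζ :=
    Polynomial.cyclotomic_eq_minpoly_rat hζ (Nat.pos_of_ne_zero hn0)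
  have hζk : IsPrimitiveRoot (ζ ^ k) n := hζ.pow_of_coprime k hk
  have hroot : Polynomial.aeval (ζ ^ k) (Polynomial.cyclotomic n ℚ) = 0 := by
    rw [Polynomial.aeval_def, ← Polynomial.eval_map, Polynomial.map_cyclotomic]
    exact hζk.isRoot_cyclotomic (Nat.pos_of_ne_zero hn0)
  have hfζk : Polynomial.aeval (ζ ^ k) f = 0 := by
    obtain ⟨g, hg⟩ := hdvd
    rw [hg, map_mul, ← hmin, hroot, zero_mul]
  simp only [hf, map_sub, map_sum, map_pow, Polynomial.aeval_X, Polynomial.aeval_C, sub_eq_zero] at hfζk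
  have : ∀ a : A, (ζ ^ k) ^ (e a) = π (a ^ k) := by
    intro a
    rw [map_pow, ← he a, ← pow_mul, ← pow_mul, mul_comm]
  rw [Finset.sum_congr rfl (fun a _ => this a)] at hfζk
  rw [map_intCast] at hfζk
  rw [hfζk, hz]

end Fourier
section BMhard
variable {A : Type*} [CommGroup A] [Fintype A]


lemma pow_image_eq {T : Set A} (h : ∀ π : A →* ℂ, ∃ z : ℤ, ∑ a ∈ T.toFinset, π a = (z : ℂ))
    {k : ℕ} (hk : Nat.gcd k (Fintype.card A) = 1) : (fun a => a ^ k) '' T = T := by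
  have hcop : (Nat.card A).Coprime k := by
    rw [Nat.card_eq_fintype_card]; exact (Nat.coprime_comm.mp hk)
  have hinj : Function.Injective (fun a : A => a ^ k) := hcop.pow_left_bijective.injective
  apply set_eq_of_char_sums
  intro π
  rw [Set.toFinset_image, Finset.sum_image (fun a _ b _ hab => hinj hab)]
  exact char_sum_pow_eq h hk π

lemma mem_of_zpowers_eq {T : Set A} (h : ∀ π : A →* ℂ, ∃ z : ℤ, ∑ a ∈ T.toFinset, π a = (z : ℂ))
    {s b : A} (hs : s ∈ T) (hzb : Subgroup.zpowers b = Subgroup.zpowers s) : b ∈ T := by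
  have hb : b ∈ Subgroup.zpowers s := hzb ▸ Subgroup.mem_zpowers b
  obtain ⟨j, hj⟩ := mem_powers_iff_mem_zpowers.mpr hb
  simp only at hj
  have hord : orderOf b = orderOf s := by
    rw [← Nat.card_zpowers, ← Nat.card_zpowers, hzb]
  have hgcd : Nat.gcd (orderOf s) j = 1 := by
    have h1 : orderOf (s ^ j) = orderOf s / Nat.gcd (orderOf s) j := orderOf_pow s
    rw [hj, hord] at h1
    have h2 : orderOf s ≠ 0 := (orderOf_pos s).ne'
    rcases (Nat.div_eq_self.mp h1.symm) with h3 | h3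
    · exact absurd h3 h2
    · exact h3
  set d := orderOf s with hd
  set n := Fintype.card A with hn
  haveI : NeZero n := ⟨Fintype.card_ne_zero⟩
  have hdn : d ∣ n := orderOf_dvd_card
  obtain ⟨u, hu⟩ := ZMod.unitsMap_surjective hdn (ZMod.unitOfCoprime j (Nat.coprime_comm.mp hgcd))
  set k := ((u : ZMod n)).val with hk
  have hcop : Nat.gcd k n = 1 := ZMod.val_coe_unit_coprime u
  have hmod : (k : ZMod d) = (j : ZMod d) := by
    rw [hk, ZMod.natCast_val, ← ZMod.castHom_apply (h := hdn)]
    have : ((ZMod.unitsMap hdn u : (ZMod d)ˣ) : ZMod d) = ZMod.castHom hdn (ZMod d) (u : ZMod n) := by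
      rw [ZMod.unitsMap_def]; rfl
    rw [← this, hu, ZMod.coe_unitOfCoprime]
  have hsk : s ^ k = s ^ j := by
    rw [pow_eq_pow_iff_modEq]
    exact (ZMod.natCast_eq_natCast_iff k j d).mp hmod
  have := pow_image_eq h hcop
  rw [← this]
  exact ⟨s, hs, by simp only; rw [hsk, hj]⟩

lemma inBoolAlg_empty : InBoolAlg A (∅ : Set A) := by
  have := InBoolAlg.inter (InBoolAlg.subgroup (⊥ : Subgroup A))
    (InBoolAlg.compl (InBoolAlg.subgroup (⊥ : Subgroup A)))
  rwa [Set.inter_compl_self] at this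

lemma inBoolAlg_biInter {β : Type*} (t : Finset β) (f : β → Set A)
    (hf : ∀ b ∈ t, InBoolAlg A (f b)) : InBoolAlg A (⋂ b ∈ t, f b) := by
  induction t using Finset.induction with
  | empty =>
      have := InBoolAlg.subgroup (⊤ : Subgroup A)
      rw [Subgroup.coe_top] at this
      simpa using this
  | @insert c t hc ih =>
      rw [Finset.set_biInter_insert]
      exact InBoolAlg.inter (hf c (Finset.mem_insert_self c t))
        (ih fun b hb => hf b (Finset.mem_insert_of_mem hb))

lemma inBoolAlg_biUnion {β : Type*} (t : Finset β) (f : β → Set A)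
    (hf : ∀ b ∈ t, InBoolAlg A (f b)) : InBoolAlg A (⋃ b ∈ t, f b) := by
  induction t using Finset.induction with
  | empty => simpa using inBoolAlg_empty
  | @insert c t hc ih =>
      rw [Finset.set_biUnion_insert]
      exact InBoolAlg.union (hf c (Finset.mem_insert_self c t))
        (ih fun b hb => hf b (Finset.mem_insert_of_mem hb))

lemma inBoolAlg_atom (s : A) :
    InBoolAlg A {b : A | Subgroup.zpowers b = Subgroup.zpowers s} := by
  have key : {b : A | Subgroup.zpowers b = Subgroup.zpowers s} =
      (Subgroup.zpowers s : Set A) ∩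
        ⋂ b ∈ Finset.univ.filter (fun b : A => Subgroup.zpowers b < Subgroup.zpowers s),
          ((Subgroup.zpowers b : Set A))ᶜ := by
    ext c
    simp only [Set.mem_setOf_eq, Set.mem_inter_iff, Set.mem_iInter, Finset.mem_filter,
      Finset.mem_univ, true_and, Set.mem_compl_iff, SetLike.mem_coe]
    constructor
    · intro hc
      refine ⟨by rw [← hc]; exact Subgroup.mem_zpowers c, ?_⟩
      intro b hb hcb
      have : Subgroup.zpowers c ≤ Subgroup.zpowers b := Subgroup.zpowers_le.mpr hcb
      rw [hc] at this
      exact absurd (lt_of_le_of_lt this hb) (lt_irrefl _)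
    · rintro ⟨hc, hmin⟩
      have hle : Subgroup.zpowers c ≤ Subgroup.zpowers s := Subgroup.zpowers_le.mpr hc
      rcases eq_or_lt_of_le hle with heq | hlt
      · exact heq
      · exact absurd (Subgroup.mem_zpowers c) (hmin c hlt)
  rw [key]
  exact InBoolAlg.inter (InBoolAlg.subgroup _)
    (inBoolAlg_biInter _ _ (fun b _ => InBoolAlg.compl (InBoolAlg.subgroup _)))

lemma bm_hard {T : Set A} (h : ∀ π : A →* ℂ, ∃ z : ℤ, ∑ a ∈ T.toFinset, π a = (z : ℂ)) :
    InBoolAlg A T := by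
  have key : T = ⋃ s ∈ T.toFinset, {b : A | Subgroup.zpowers b = Subgroup.zpowers s} := by
    ext c
    simp only [Set.mem_iUnion, Set.mem_setOf_eq, Set.mem_toFinset]
    constructor
    · intro hc; exact ⟨c, hc, rfl⟩
    · rintro ⟨s, hs, hzs⟩; exact mem_of_zpowers_eq h hs hzs
  rw [key]
  exact inBoolAlg_biUnion _ _ (fun s _ => inBoolAlg_atom s)

end BMhard
section BMeasy
variable {A : Type*} [CommGroup A] [Fintype A]

/-- indicator of a set, as a function to `ℂ`. -/
noncomputable def indC (s : Set A) : A → ℂ := fun a => if a ∈ s then 1 else 0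

def sgGens (A : Type*) [CommGroup A] : Set (A → ℂ) :=
  {g | ∃ H : Subgroup A, g = indC (H : Set A)}

lemma indC_mul (s t : Set A) : indC (s ∩ t) = indC s * indC t := by
  funext a
  simp only [indC, Pi.mul_apply, Set.mem_inter_iff]
  by_cases h1 : a ∈ s <;> by_cases h2 : a ∈ t <;> simp [h1, h2]

lemma span_gens_mul {f g : A → ℂ} (hf : f ∈ Submodule.span ℤ (sgGens A))
    (hg : g ∈ Submodule.span ℤ (sgGens A)) : f * g ∈ Submodule.span ℤ (sgGens A) := by
  induction hf using Submodule.span_induction with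
  | mem x hx =>
      induction hg using Submodule.span_induction with
      | mem y hy =>
          obtain ⟨H, rfl⟩ := hx
          obtain ⟨K, rfl⟩ := hy
          refine Submodule.subset_span ⟨H ⊓ K, ?_⟩
          rw [← indC_mul, Subgroup.coe_inf]
      | zero => rw [mul_zero]; exact Submodule.zero_mem _
      | add y z _ _ hy hz => rw [mul_add]; exact Submodule.add_mem _ hy hz
      | smul c y _ hy => rw [Algebra.mul_smul_comm]; exact Submodule.smul_mem _ c hy
  | zero => rw [zero_mul]; exact Submodule.zero_mem _
  | add y z _ _ hy hz => rw [add_mul]; exact Submodule.add_mem _ hy hz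
  | smul c y _ hy => rw [Algebra.smul_mul_assoc]; exact Submodule.smul_mem _ c hy

lemma indC_mem_span {s : Set A} (hs : InBoolAlg A s) : indC s ∈ Submodule.span ℤ (sgGens A) := by
  induction hs with
  | subgroup H => exact Submodule.subset_span ⟨H, rfl⟩
  | @compl s _ ih =>
      have : indC sᶜ = indC ((⊤ : Subgroup A) : Set A) - indC s := by
        funext a
        simp only [indC, Pi.sub_apply, Set.mem_compl_iff]
        by_cases h : a ∈ s <;> simp [h]
      rw [this]
      exact Submodule.sub_mem _ (Submodule.subset_span ⟨⊤, rfl⟩) ih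
  | @union s t _ _ ihs iht =>
      have : indC (s ∪ t) = indC s + indC t - indC s * indC t := by
        funext a
        simp only [indC, Pi.sub_apply, Pi.add_apply, Pi.mul_apply, Set.mem_union]
        by_cases h1 : a ∈ s <;> by_cases h2 : a ∈ t <;> simp [h1, h2]
      rw [this]
      exact Submodule.sub_mem _ (Submodule.add_mem _ ihs iht) (span_gens_mul ihs iht)
  | @inter s t _ _ ihs iht => rw [indC_mul]; exact span_gens_mul ihs iht

lemma subgroup_char_sum (H : Subgroup A) (π : A →* ℂ) :
    ∃ z : ℤ, ∑ a : A, indC (H : Set A) a * π a = (z : ℂ) := by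
  have key : ∑ a : A, indC (H : Set A) a * π a
      = ∑ a ∈ Finset.univ.filter (fun a => a ∈ H), π a := by
    rw [Finset.sum_filter]
    apply Finset.sum_congr rfl
    intro a _
    simp only [indC, SetLike.mem_coe]
    by_cases h : a ∈ H <;> simp [h]
  by_cases hπ : ∀ h ∈ H, π h = 1
  · refine ⟨(Finset.univ.filter (fun a => a ∈ H)).card, ?_⟩
    rw [key, Finset.sum_congr rfl (fun a ha => hπ a (Finset.mem_filter.mp ha).2),
      Finset.sum_const, nsmul_eq_mul, mul_one]
    norm_num
  · push_neg at hπ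
    obtain ⟨h₀, hh₀, hne⟩ := hπ
    refine ⟨0, ?_⟩
    rw [key]
    set F := Finset.univ.filter (fun a => a ∈ H) with hF
    have hshift : π h₀ * ∑ a ∈ F, π a = ∑ a ∈ F, π a := by
      rw [Finset.mul_sum]
      refine Finset.sum_nbij' (fun a => h₀ * a) (fun a => h₀⁻¹ * a) ?_ ?_ ?_ ?_ ?_
      · intro a ha
        simp only [hF, Finset.mem_filter, Finset.mem_univ, true_and] at ha ⊢
        exact H.mul_mem hh₀ ha
      · intro a ha
        simp only [hF, Finset.mem_filter, Finset.mem_univ, true_and] at ha ⊢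
        exact H.mul_mem (H.inv_mem hh₀) ha
      · intro a _; simp
      · intro a _; simp
      · intro a _; simp [map_mul]
    have h2 : (π h₀ - 1) * ∑ a ∈ F, π a = 0 := by
      rw [sub_mul, one_mul, sub_eq_zero]; exact hshift
    have := (mul_eq_zero.mp h2).resolve_left (sub_ne_zero.mpr hne)
    rw [this]
    norm_num
  
lemma bm_easy {s : Set A} (hs : InBoolAlg A s) (π : A →* ℂ) :
    ∃ z : ℤ, ∑ a ∈ s.toFinset, π a = (z : ℂ) := by
  set M := Submodule.span ℤ ({(1 : ℂ)} : Set ℂ) with hM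
  set φ : (A → ℂ) →ₗ[ℤ] ℂ :=
    { toFun := fun f => ∑ a : A, f a * π a
      map_add' := by intro f g; simp [add_mul, Finset.sum_add_distrib]
      map_smul' := by
        intro c f
        simp only [Pi.smul_apply, smul_mul_assoc, RingHom.id_apply, ← Finset.smul_sum] } with hφ
  have hle : Submodule.span ℤ (sgGens A) ≤ Submodule.comap φ M := by
    rw [Submodule.span_le]
    rintro g ⟨H, rfl⟩
    obtain ⟨z, hz⟩ := subgroup_char_sum H π
    simp only [SetLike.mem_coe, Submodule.mem_comap, hφ, LinearMap.coe_mk, AddHom.coe_mk]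
    rw [hz, hM]
    exact Submodule.mem_span_singleton.mpr ⟨z, by simp⟩
  have hmem := hle (indC_mem_span hs)
  simp only [Submodule.mem_comap, hφ, LinearMap.coe_mk, AddHom.coe_mk, hM] at hmem
  obtain ⟨z, hz⟩ := Submodule.mem_span_singleton.mp hmem
  refine ⟨z, ?_⟩
  have key : ∑ a : A, indC s a * π a = ∑ a ∈ s.toFinset, π a := by
    have h1 : ∑ a : A, indC s a * π a = ∑ a : A, (if a ∈ s then π a else 0) :=
      Finset.sum_congr rfl (fun a _ => by by_cases h : a ∈ s <;> simp [indC, h])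
    rw [h1, ← Finset.sum_filter]
    congr 1
    ext a
    simp
  rw [← key, ← hz, zsmul_eq_mul, mul_one]

end BMeasy

section Graph

variable {A : Type*} [CommGroup A] [Fintype A] {y : A} {hy : y * y = 1}
variable {S : Set (Dic A y hy)} {S₁ S₂ : Set A}

omit [Fintype A] in
lemma mem_S_false (hS : S = Dic.ofA '' S₁ ∪ (fun a => Dic.x A y hy * Dic.ofA a) '' S₂) (a : A) :
    (⟨false, a⟩ : Dic A y hy) ∈ S ↔ a ∈ S₁ := by
  subst hS
  constructor
  · rintro (⟨b, hb, hba⟩ | ⟨b, hb, hba⟩)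
    · obtain rfl : b = a := congrArg Dic.a hba
      exact hb
    · exact absurd (congrArg Dic.t hba) (by simp [Dic.x, Dic.ofA])
  · intro ha
    exact Or.inl ⟨a, ha, rfl⟩

omit [Fintype A] in
lemma mem_S_true (hS : S = Dic.ofA '' S₁ ∪ (fun a => Dic.x A y hy * Dic.ofA a) '' S₂) (a : A) :
    (⟨true, a⟩ : Dic A y hy) ∈ S ↔ a ∈ S₂ := by
  subst hS
  have hx : ∀ b : A, Dic.x A y hy * Dic.ofA b = (⟨true, b⟩ : Dic A y hy) := by
    intro b
    show (⟨xor true false, _⟩ : Dic A y hy) = _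
    ext
    · rfl
    · show (if false then (1:A)⁻¹ else 1) * b * (if true && false then y else 1) = b
      simp
  constructor
  · rintro (⟨b, hb, hba⟩ | ⟨b, hb, hba⟩)
    · exact absurd (congrArg Dic.t hba) (by simp [Dic.ofA])
    · simp only at hba
      rw [hx b] at hba
      obtain rfl : b = a := congrArg Dic.a hba
      exact hb
  · intro ha
    exact Or.inr ⟨a, ha, by simp only; rw [hx a]⟩

omit [Fintype A] in
lemma mem_S_inv (hSinv : S⁻¹ = S) (g : Dic A y hy) : g⁻¹ ∈ S ↔ g ∈ S := by
  constructor
  · intro h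
    rw [← hSinv] at h
    rwa [Set.mem_inv, inv_inv] at h
  · intro h
    rw [← hSinv, Set.mem_inv, inv_inv]
    exact h

omit [Fintype A] in
lemma S₁_inv (hS : S = Dic.ofA '' S₁ ∪ (fun a => Dic.x A y hy * Dic.ofA a) '' S₂)
    (hSinv : S⁻¹ = S) (a : A) : a⁻¹ ∈ S₁ ↔ a ∈ S₁ := by
  rw [← mem_S_false hS, ← mem_S_false hS a]
  have : (⟨false, a⁻¹⟩ : Dic A y hy) = (⟨false, a⟩ : Dic A y hy)⁻¹ := by
    ext <;> simp
  rw [this, mem_S_inv hSinv]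

omit [Fintype A] in
lemma S₂_y (hS : S = Dic.ofA '' S₁ ∪ (fun a => Dic.x A y hy * Dic.ofA a) '' S₂)
    (hSinv : S⁻¹ = S) (a : A) : y * a ∈ S₂ ↔ a ∈ S₂ := by
  rw [← mem_S_true hS, ← mem_S_true hS a]
  have : (⟨true, y * a⟩ : Dic A y hy) = (⟨true, a⟩ : Dic A y hy)⁻¹ := by
    ext <;> simp
  rw [this, mem_S_inv hSinv]

omit [Fintype A] in
lemma cayley_adj (h1S : (1 : Dic A y hy) ∉ S) (hSinv : S⁻¹ = S) (g h : Dic A y hy) :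
    (cayley S).Adj g h ↔ g⁻¹ * h ∈ S := by
  rw [cayley, SimpleGraph.fromRel_adj]
  constructor
  · rintro ⟨hne, hmem | hmem⟩
    · exact hmem
    · have : (h⁻¹ * g)⁻¹ ∈ S := (mem_S_inv hSinv _).mpr hmem
      rwa [mul_inv_rev, inv_inv] at this
  · intro hmem
    refine ⟨?_, Or.inl hmem⟩
    rintro rfl
    rw [inv_mul_cancel] at hmem
    exact h1S hmem

end Graph

section Graph2

variable {A : Type*} [CommGroup A] [Fintype A] {y : A} {hy : y * y = 1}
variable {S : Set (Dic A y hy)} {S₁ S₂ : Set A}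

/-- The explicit equivalence `Bool × A ≃ Dic A y hy`. -/
def dicEquiv (A : Type*) [CommGroup A] (y : A) (hy : y * y = 1) : Bool × A ≃ Dic A y hy where
  toFun := fun p => ⟨p.1, p.2⟩
  invFun := fun g => (g.t, g.a)
  left_inv := fun _ => rfl
  right_inv := fun _ => rfl

lemma sum_S_split (hS : S = Dic.ofA '' S₁ ∪ (fun a => Dic.x A y hy * Dic.ofA a) '' S₂)
    (F : Dic A y hy → ℂ) :
    ∑ w ∈ S.toFinset, F w
      = ∑ s ∈ S₁.toFinset, F ⟨false, s⟩ + ∑ s ∈ S₂.toFinset, F ⟨true, s⟩ := by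
  have h1 : ∑ w ∈ S.toFinset, F w = ∑ w : Dic A y hy, if w ∈ S then F w else 0 := by
    rw [← Finset.sum_filter]
    apply Finset.sum_congr _ (fun _ _ => rfl)
    ext w
    simp
  have h2 : ∑ w : Dic A y hy, (if w ∈ S then F w else 0)
      = ∑ p : Bool × A, (if (dicEquiv A y hy p) ∈ S then F (dicEquiv A y hy p) else 0) :=
    (Equiv.sum_comp (dicEquiv A y hy) _).symm
  rw [h1, h2, Fintype.sum_prod_type, Fintype.sum_bool]
  have h3 : ∀ a : A, dicEquiv A y hy (true, a) = (⟨true, a⟩ : Dic A y hy) := fun _ => rfl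
  have h4 : ∀ a : A, dicEquiv A y hy (false, a) = (⟨false, a⟩ : Dic A y hy) := fun _ => rfl
  simp only [h3, h4]
  rw [add_comm]
  congr 1
  · rw [← Finset.sum_filter]
    apply Finset.sum_congr _ (fun _ _ => rfl)
    ext a
    simp [mem_S_false hS]
  · rw [← Finset.sum_filter]
    apply Finset.sum_congr _ (fun _ _ => rfl)
    ext a
    simp [mem_S_true hS]

lemma sum_inv_S₁ (hS : S = Dic.ofA '' S₁ ∪ (fun a => Dic.x A y hy * Dic.ofA a) '' S₂)
    (hSinv : S⁻¹ = S) (π : A →* ℂ) :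
    ∑ a ∈ S₁.toFinset, π a⁻¹ = ∑ a ∈ S₁.toFinset, π a := by
  refine Finset.sum_nbij' (fun a => a⁻¹) (fun a => a⁻¹) ?_ ?_ ?_ ?_ ?_ <;>
    intro a ha <;> simp_all [S₁_inv hS hSinv]

lemma sum_y_S₂ (hS : S = Dic.ofA '' S₁ ∪ (fun a => Dic.x A y hy * Dic.ofA a) '' S₂)
    (hSinv : S⁻¹ = S) (π : A →* ℂ) :
    ∑ a ∈ S₂.toFinset, π (y * a) = ∑ a ∈ S₂.toFinset, π a := by
  refine Finset.sum_nbij' (fun a => y * a) (fun a => y * a) ?_ ?_ ?_ ?_ ?_ <;>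
      intro a ha <;> simp_all [S₂_y hS hSinv]
  · rw [← mul_assoc, hy, one_mul]
  · rw [← mul_assoc, hy, one_mul]

lemma sum_inv_S₂ (π : A →* ℂ) :
    ∑ a ∈ (S₂⁻¹).toFinset, π a = ∑ a ∈ S₂.toFinset, π a⁻¹ := by
  refine Finset.sum_nbij' (fun a => a⁻¹) (fun a => a⁻¹) ?_ ?_ ?_ ?_ ?_ <;>
    intro a ha <;> simp_all [Set.mem_inv]

lemma mulVec_eigen (hS : S = Dic.ofA '' S₁ ∪ (fun a => Dic.x A y hy * Dic.ofA a) '' S₂)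
    (h1S : (1 : Dic A y hy) ∉ S) (hSinv : S⁻¹ = S) (π : A →* ℂ) (c₁ c₄ : ℂ) :
    ((cayley S).adjMatrix ℂ).mulVec
        (fun g : Dic A y hy => if g.t then c₄ * π g.a⁻¹ else c₁ * π g.a) =
      fun g : Dic A y hy => if g.t
        then (c₄ * (∑ a ∈ S₁.toFinset, π a) + c₁ * (∑ a ∈ S₂.toFinset, π a)) * π g.a⁻¹
        else (c₁ * (∑ a ∈ S₁.toFinset, π a) + c₄ * (∑ a ∈ S₂.toFinset, π a⁻¹)) * π g.a := by
  funext g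
  rw [SimpleGraph.adjMatrix_mulVec_apply]
  have hnb : (cayley S).neighborFinset g = Finset.univ.filter (fun h => g⁻¹ * h ∈ S) := by
    ext h
    rw [SimpleGraph.mem_neighborFinset, cayley_adj h1S hSinv]
    simp
  rw [hnb, Finset.sum_filter]
  have hre : ∑ h : Dic A y hy, (if g⁻¹ * h ∈ S then (if h.t then c₄ * π h.a⁻¹ else c₁ * π h.a) else 0)
      = ∑ w : Dic A y hy, (if w ∈ S then (if (g*w).t then c₄ * π (g*w).a⁻¹ else c₁ * π (g*w).a) else 0) := by
    refine (Fintype.sum_bijective (fun w => g * w) (Group.mulLeft_bijective g) _ _ ?_).symm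
    intro w
    simp [inv_mul_cancel_left]
  rw [hre]
  have hsum : ∑ w : Dic A y hy, (if w ∈ S then (if (g*w).t then c₄ * π (g*w).a⁻¹ else c₁ * π (g*w).a) else 0)
      = ∑ w ∈ S.toFinset, (if (g*w).t then c₄ * π (g*w).a⁻¹ else c₁ * π (g*w).a) := by
    rw [← Finset.sum_filter]
    apply Finset.sum_congr _ (fun _ _ => rfl)
    ext w
    simp
  rw [hsum, sum_S_split hS]
  obtain ⟨t, a⟩ := g
  cases t
  · -- g = ⟨false, a⟩
    simp only [Dic.mul_t, Dic.mul_a]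
    norm_num
    simp only [Finset.mul_sum, add_mul, Finset.sum_mul]
    congr 1
    · exact Finset.sum_congr rfl (fun x _ => by ring)
    · exact Finset.sum_congr rfl (fun x _ => by ring)
  · -- g = ⟨true, a⟩
    simp only [Dic.mul_t, Dic.mul_a]
    norm_num
    rw [← sum_inv_S₁ hS hSinv π, ← sum_y_S₂ hS hSinv π]
    simp only [Finset.mul_sum, add_mul, Finset.sum_mul, map_mul, map_inv]
    congr 1
    · exact Finset.sum_congr rfl (fun x _ => by ring)
    · exact Finset.sum_congr rfl (fun x _ => by ring)

end Graph2

section Spec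

variable {V : Type*} [Fintype V] (Γ : SimpleGraph V)

lemma spec_iff (μ : ℝ) :
    μ ∈ spectrum ℝ (Γ.adjMatrix ℝ) ↔
      ∃ v : V → ℂ, v ≠ 0 ∧ (Γ.adjMatrix ℂ).mulVec v = (μ : ℂ) • v := by
  rw [spectrum.mem_iff]
  have h1 : ¬IsUnit (algebraMap ℝ (Matrix V V ℝ) μ - Γ.adjMatrix ℝ)
      ↔ (algebraMap ℝ (Matrix V V ℝ) μ - Γ.adjMatrix ℝ).det = 0 := by
    rw [Matrix.isUnit_iff_isUnit_det, isUnit_iff_ne_zero, not_not]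
  have hmap : (algebraMap ℝ (Matrix V V ℝ) μ - Γ.adjMatrix ℝ).map Complex.ofRealHom
      = algebraMap ℂ (Matrix V V ℂ) (μ : ℂ) - Γ.adjMatrix ℂ := by
    ext i j
    simp only [Matrix.map_apply, Matrix.sub_apply, Matrix.algebraMap_matrix_apply,
      SimpleGraph.adjMatrix_apply]
    by_cases h : i = j <;> by_cases h2 : Γ.Adj i j <;>
      simp [h, h2, Complex.ofRealHom]
  have h2 : (algebraMap ℝ (Matrix V V ℝ) μ - Γ.adjMatrix ℝ).det = 0
      ↔ (algebraMap ℂ (Matrix V V ℂ) (μ : ℂ) - Γ.adjMatrix ℂ).det = 0 := by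
    have hdet := RingHom.map_det Complex.ofRealHom (algebraMap ℝ (Matrix V V ℝ) μ - Γ.adjMatrix ℝ)
    rw [RingHom.mapMatrix_apply, hmap] at hdet
    rw [← hdet]
    constructor
    · intro h; rw [h]; exact map_zero _
    · intro h
      have h' : ((((algebraMap ℝ (Matrix V V ℝ)) μ - SimpleGraph.adjMatrix ℝ Γ).det : ℝ) : ℂ) = 0 := h
      exact_mod_cast h' 
  rw [h1, h2, ← Matrix.exists_mulVec_eq_zero_iff]
  constructor
  · rintro ⟨v, hv0, hv⟩
    refine ⟨v, hv0, ?_⟩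
    rw [Matrix.sub_mulVec] at hv
    have halg : (algebraMap ℂ (Matrix V V ℂ) (μ : ℂ)).mulVec v = (μ : ℂ) • v := by
      rw [Algebra.algebraMap_eq_smul_one, Matrix.smul_mulVec, Matrix.one_mulVec]
    rw [halg] at hv
    have := sub_eq_zero.mp hv
    exact this.symm
  · rintro ⟨v, hv0, hv⟩
    refine ⟨v, hv0, ?_⟩
    rw [Matrix.sub_mulVec]
    have halg : (algebraMap ℂ (Matrix V V ℂ) (μ : ℂ)).mulVec v = (μ : ℂ) • v := by
      rw [Algebra.algebraMap_eq_smul_one, Matrix.smul_mulVec, Matrix.one_mulVec]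
    rw [halg, hv, sub_self]

end Spec

section Span

variable {A : Type*} [CommGroup A] [Fintype A] {y : A} {hy : y * y = 1}

/-- `Φ`: extend `u : A → ℂ` to the `t = false` part. -/
noncomputable def PhiL (A : Type*) [CommGroup A] (y : A) (hy : y * y = 1) :
    (A → ℂ) →ₗ[ℂ] (Dic A y hy → ℂ) where
  toFun := fun u g => if g.t then 0 else u g.a
  map_add' := fun u v => by funext g; by_cases h : g.t <;> simp [h]
  map_smul' := fun c u => by funext g; by_cases h : g.t <;> simp [h]

/-- `Ψ`: extend `u : A → ℂ` to the `t = true` part (with inversion). -/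
noncomputable def PsiL (A : Type*) [CommGroup A] (y : A) (hy : y * y = 1) :
    (A → ℂ) →ₗ[ℂ] (Dic A y hy → ℂ) where
  toFun := fun u g => if g.t then u g.a⁻¹ else 0
  map_add' := fun u v => by funext g; by_cases h : g.t <;> simp [h]
  map_smul' := fun c u => by funext g; by_cases h : g.t <;> simp [h]

lemma span_dic_top :
    Submodule.span ℂ
      ((Set.range fun π : A →* ℂ => PhiL A y hy ⇑π) ∪
        (Set.range fun π : A →* ℂ => PsiL A y hy ⇑π)) = ⊤ := by
  rw [eq_top_iff]
  intro w _
  have hd : w = PhiL A y hy (fun a => w ⟨false, a⟩) + PsiL A y hy (fun a => w ⟨true, a⁻¹⟩) := by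
    funext g
    obtain ⟨t, a⟩ := g
    cases t <;> simp [PhiL, PsiL]
  have hmem : ∀ (L : (A → ℂ) →ₗ[ℂ] (Dic A y hy → ℂ)) (u : A → ℂ),
      L u ∈ Submodule.span ℂ (L '' (Set.range (fun π : A →* ℂ => (π : A → ℂ)))) := by
    intro L u
    apply Submodule.apply_mem_span_image_of_mem_span
    rw [span_char_range_top A]
    trivial
  rw [hd]
  refine Submodule.add_mem _ ?_ ?_
  · refine Submodule.span_mono ?_ (hmem (PhiL A y hy) _)
    rintro f ⟨u, ⟨π, rfl⟩, rfl⟩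
    exact Or.inl ⟨π, rfl⟩
  · refine Submodule.span_mono ?_ (hmem (PsiL A y hy) _)
    rintro f ⟨u, ⟨π, rfl⟩, rfl⟩
    exact Or.inr ⟨π, rfl⟩

variable {S : Set (Dic A y hy)} {S₁ S₂ : Set A}

lemma eigen_pair_exists
    (hS : S = Dic.ofA '' S₁ ∪ (fun a => Dic.x A y hy * Dic.ofA a) '' S₂)
    (h1S : (1 : Dic A y hy) ∉ S) (hSinv : S⁻¹ = S) (μ : ℂ) (v : Dic A y hy → ℂ)
    (hv0 : v ≠ 0) (hv : ((cayley S).adjMatrix ℂ).mulVec v = μ • v) :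
    ∃ π : A →* ℂ, (μ - ∑ a ∈ S₁.toFinset, π a) ^ 2
      = (∑ a ∈ S₂.toFinset, π a) * (∑ a ∈ S₂.toFinset, π a⁻¹) := by
  by_contra hcon
  push_neg at hcon
  set N := (cayley S).adjMatrix ℂ with hN
  set T : (Dic A y hy → ℂ) →ₗ[ℂ] (Dic A y hy → ℂ) :=
    μ • LinearMap.id - Matrix.mulVecLin N with hT
  have key : ∀ (π : A →* ℂ) (c₁ c₄ : ℂ),
      T (fun g : Dic A y hy => if g.t then c₄ * π g.a⁻¹ else c₁ * π g.a) =
        fun g : Dic A y hy => if g.t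
          then (μ * c₄ - (c₄ * (∑ a ∈ S₁.toFinset, π a) + c₁ * (∑ a ∈ S₂.toFinset, π a))) * π g.a⁻¹
          else (μ * c₁ - (c₁ * (∑ a ∈ S₁.toFinset, π a) + c₄ * (∑ a ∈ S₂.toFinset, π a⁻¹))) * π g.a := by
    intro π c₁ c₄
    funext g
    have hme := congrFun (mulVec_eigen hS h1S hSinv π c₁ c₄) g
    simp only [hT, LinearMap.sub_apply, LinearMap.smul_apply, LinearMap.id_apply,
      Matrix.mulVecLin_apply, Pi.sub_apply, Pi.smul_apply, smul_eq_mul]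
    rw [hme]
    by_cases h : g.t <;> simp [h] <;> ring
  have hsurj : Function.Surjective T := by
    rw [← LinearMap.range_eq_top, eq_top_iff, ← span_dic_top, Submodule.span_le]
    rintro f (⟨π, rfl⟩ | ⟨π, rfl⟩)
    · set p := ∑ a ∈ S₁.toFinset, π a with hp
      set q := ∑ a ∈ S₂.toFinset, π a with hq
      set q' := ∑ a ∈ S₂.toFinset, π a⁻¹ with hq'
      have hD : (μ - p) ^ 2 - q * q' ≠ 0 := sub_ne_zero.mpr (hcon π)
      set D := (μ - p) ^ 2 - q * q' with hDdef
      refine ⟨(fun g : Dic A y hy => if g.t then (q / D) * π g.a⁻¹ else ((μ - p) / D) * π g.a), ?_⟩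
      rw [key π ((μ - p)/D) (q/D)]
      have e1 : μ * (q / D) - (q / D * p + (μ - p) / D * q) = 0 := by
        field_simp
        ring
      have e2 : μ * ((μ - p) / D) - ((μ - p) / D * p + q / D * q') = 1 := by
        field_simp
        rw [hDdef]
        ring
      rw [e1, e2]
      funext g
      by_cases h : g.t = true <;> simp [PhiL, h]
    · set p := ∑ a ∈ S₁.toFinset, π a with hp
      set q := ∑ a ∈ S₂.toFinset, π a with hq
      set q' := ∑ a ∈ S₂.toFinset, π a⁻¹ with hq'
      have hD : (μ - p) ^ 2 - q * q' ≠ 0 := sub_ne_zero.mpr (hcon π)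
      set D := (μ - p) ^ 2 - q * q' with hDdef
      refine ⟨(fun g : Dic A y hy => if g.t then ((μ - p) / D) * π g.a⁻¹ else (q' / D) * π g.a), ?_⟩
      rw [key π (q'/D) ((μ - p)/D)]
      have e1 : μ * ((μ - p) / D) - ((μ - p) / D * p + q' / D * q) = 1 := by
        field_simp
        rw [hDdef]
        ring
      have e2 : μ * (q' / D) - (q' / D * p + (μ - p) / D * q') = 0 := by
        field_simp
        ring
      rw [e1, e2]
      funext g
      by_cases h : g.t = true <;> simp [PsiL, h]
  have hinj : Function.Injective T := LinearMap.injective_iff_surjective.mpr hsurj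
  have hTv : T v = 0 := by
    simp only [hT, LinearMap.sub_apply, LinearMap.smul_apply, LinearMap.id_apply,
      Matrix.mulVecLin_apply, hv]
    rw [sub_self]
  exact hv0 (hinj (by rw [hTv, map_zero]))

end Span

section Final

variable {A : Type*} [CommGroup A] [Fintype A] {y : A} {hy : y * y = 1}
variable {S : Set (Dic A y hy)} {S₁ S₂ : Set A}

lemma rat_to_int (x : ℚ) (hx : IsIntegral ℤ ((x : ℂ))) : ∃ z : ℤ, (z : ℚ) = x := by
  have halg : (IsScalarTower.toAlgHom ℤ ℚ ℂ) x = (x : ℂ) := by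
    simp [IsScalarTower.coe_toAlgHom', eq_ratCast]
  have hint : IsIntegral ℤ x := by
    refine (isIntegral_algHom_iff (IsScalarTower.toAlgHom ℤ ℚ ℂ) ?_).mp ?_
    · intro a b hab
      exact (algebraMap ℚ ℂ).injective (by simpa [IsScalarTower.coe_toAlgHom'] using hab)
    · rwa [halg]
  obtain ⟨z, hz⟩ := IsIntegrallyClosed.isIntegral_iff.mp hint
  exact ⟨z, by exact_mod_cast hz⟩

lemma spec_mem_of (hS : S = Dic.ofA '' S₁ ∪ (fun a => Dic.x A y hy * Dic.ofA a) '' S₂)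
    (h1S : (1 : Dic A y hy) ∉ S) (hSinv : S⁻¹ = S) (π : A →* ℂ) (c₁ c₄ : ℂ) (s : ℝ)
    (hc₁ : c₁ ≠ 0)
    (h1 : c₁ * (∑ a ∈ S₁.toFinset, π a) + c₄ * (∑ a ∈ S₂.toFinset, π a⁻¹) = (s : ℂ) * c₁)
    (h2 : c₄ * (∑ a ∈ S₁.toFinset, π a) + c₁ * (∑ a ∈ S₂.toFinset, π a) = (s : ℂ) * c₄) :
    s ∈ spectrum ℝ ((cayley S).adjMatrix ℝ) := by
  rw [spec_iff]
  refine ⟨fun g : Dic A y hy => if g.t then c₄ * π g.a⁻¹ else c₁ * π g.a, ?_, ?_⟩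
  · intro h0
    have h00 := congrFun h0 (⟨false, 1⟩ : Dic A y hy)
    simp at h00
    exact hc₁ h00
  · rw [mulVec_eigen hS h1S hSinv π c₁ c₄]
    funext g
    by_cases h : g.t = true <;> simp only [h, if_true, if_false, Pi.smul_apply, smul_eq_mul,
      Bool.false_eq_true, ite_true, ite_false]
    · rw [h2]; ring
    · rw [h1]; ring

lemma forward_master (hS : S = Dic.ofA '' S₁ ∪ (fun a => Dic.x A y hy * Dic.ofA a) '' S₂)
    (h1S : (1 : Dic A y hy) ∉ S) (hSinv : S⁻¹ = S)
    (hInt : IsIntegralGraph (cayley S)) (π : A →* ℂ) :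
    (∃ z : ℤ, ∑ a ∈ S₁.toFinset, π a = (z : ℂ)) ∧
      (∃ α : ℤ, (∑ a ∈ S₂.toFinset, π a) * (∑ a ∈ S₂.toFinset, π a⁻¹) = (α : ℂ) ^ 2) := by
  have hpconj : (starRingEnd ℂ) (∑ a ∈ S₁.toFinset, π a) = ∑ a ∈ S₁.toFinset, π a := by
    rw [map_sum, Finset.sum_congr rfl (fun a (_ : a ∈ S₁.toFinset) => (char_inv π a).symm)]
    exact sum_inv_S₁ hS hSinv π
  have hpre : (((∑ a ∈ S₁.toFinset, π a).re : ℝ) : ℂ) = ∑ a ∈ S₁.toFinset, π a :=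
    Complex.conj_eq_iff_re.mp hpconj
  have hq'conj : ∑ a ∈ S₂.toFinset, π a⁻¹ = (starRingEnd ℂ) (∑ a ∈ S₂.toFinset, π a) := by
    rw [map_sum]
    exact Finset.sum_congr rfl (fun a _ => char_inv π a)
  have hqq' : (∑ a ∈ S₂.toFinset, π a) * (∑ a ∈ S₂.toFinset, π a⁻¹)
      = ((‖∑ a ∈ S₂.toFinset, π a‖ : ℝ) : ℂ) ^ 2 := by
    rw [hq'conj, Complex.mul_conj, ← Complex.sq_norm]
    push_cast
    ring
  set P : ℝ := (∑ a ∈ S₁.toFinset, π a).re with hP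
  set r : ℝ := ‖∑ a ∈ S₂.toFinset, π a‖ with hr
  -- spectrum membership of P ± r
  have hm : ∀ ε : ℝ, ε = 1 ∨ ε = -1 → ∃ k : ℤ, (k : ℝ) = P + ε * r := by
    intro ε hε
    by_cases hq0 : (∑ a ∈ S₂.toFinset, π a) = 0
    · have hr0 : r = 0 := by rw [hr, hq0]; simp
      refine hInt _ (spec_mem_of hS h1S hSinv π 1 0 (P + ε * r) one_ne_zero ?_ ?_)
      · rw [hr0]
        push_cast
        rw [hpre]
        ring
      · rw [hq0, hr0]
        ring
    · have hc₁ : (∑ a ∈ S₂.toFinset, π a⁻¹) ≠ 0 := by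
        rw [hq'conj]
        exact star_ne_zero.mpr hq0
      rcases hε with rfl | rfl
      · refine hInt _ (spec_mem_of hS h1S hSinv π (∑ a ∈ S₂.toFinset, π a⁻¹) ((1:ℝ) * (r : ℂ))
          (P + 1 * r) hc₁ ?_ ?_)
        · rw [← hpre]; push_cast; ring
        · rw [← hpre]; push_cast; linear_combination hqq'
      · refine hInt _ (spec_mem_of hS h1S hSinv π (∑ a ∈ S₂.toFinset, π a⁻¹) ((-1:ℝ) * (r : ℂ))
          (P + (-1) * r) hc₁ ?_ ?_)
        · rw [← hpre]; push_cast; ring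
        · rw [← hpre]; push_cast; linear_combination hqq'
  obtain ⟨k₁, hk₁⟩ := hm 1 (Or.inl rfl)
  obtain ⟨k₂, hk₂⟩ := hm (-1) (Or.inr rfl)
  have hk₁' : (k₁ : ℝ) = P + r := by rw [hk₁]; ring
  have hk₂' : (k₂ : ℝ) = P - r := by rw [hk₂]; ring
  have hPint : IsIntegral ℤ (∑ a ∈ S₁.toFinset, π a) :=
    IsIntegral.sum _ (fun a _ => char_isIntegral π a)
  have hQQ'int : IsIntegral ℤ ((∑ a ∈ S₂.toFinset, π a) * (∑ a ∈ S₂.toFinset, π a⁻¹)) :=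
    (IsIntegral.sum _ (fun a _ => char_isIntegral π a)).mul
      (IsIntegral.sum _ (fun a _ => char_isIntegral π a⁻¹))
  have hP2 : P = ((k₁ : ℝ) + (k₂ : ℝ)) / 2 := by linarith
  have hr2 : r = ((k₁ : ℝ) - (k₂ : ℝ)) / 2 := by linarith
  constructor
  · have hx : (((k₁ + k₂ : ℚ) / 2 : ℚ) : ℂ) = ∑ a ∈ S₁.toFinset, π a := by
      rw [← hpre, hP2]
      push_cast
      ring
    obtain ⟨z, hz⟩ := rat_to_int _ (by rw [hx]; exact hPint)
    refine ⟨z, ?_⟩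
    rw [← hx, ← hz]
    norm_cast
  · have hx2 : ((((k₁ - k₂ : ℚ) / 2) ^ 2 : ℚ) : ℂ)
        = (∑ a ∈ S₂.toFinset, π a) * (∑ a ∈ S₂.toFinset, π a⁻¹) := by
      rw [hqq', hr2]
      push_cast
      ring
    obtain ⟨w, hw⟩ := rat_to_int _ (by rw [hx2]; exact hQQ'int)
    have hw4 : (k₁ - k₂) ^ 2 = 4 * w := by
      have h4 : ((k₁ - k₂ : ℚ)) ^ 2 = 4 * (w : ℚ) := by
        rw [hw]
        field_simp
        ring
      exact_mod_cast h4
    have heven : Even (k₁ - k₂) := (Int.even_pow.mp (by rw [hw4]; exact ⟨2 * w, by ring⟩)).1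
    obtain ⟨α, hα2⟩ := heven
    have hrα : r = (α : ℝ) := by
      have h2α : k₁ - k₂ = 2 * α := by rw [hα2]; ring
      rw [hr2]
      rw [show (k₁ : ℝ) - (k₂ : ℝ) = ((k₁ - k₂ : ℤ) : ℝ) by push_cast; ring, h2α]
      push_cast
      ring
    exact ⟨α, by rw [hqq', hrα]; norm_cast⟩

end Final

/-- Theorem 3.1: `Cay(Dic(A,y), S)` with `S = S₁ ∪ xS₂` is integral iff
`S₁ ∈ B(A)` and, for every one-dimensional representation `π : A → ℂ*` of `A` whose kernel
does not contain `A²`, one has `π(S₂)·π(S₂⁻¹) = α²` for some integer `α`. -/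
theorem cayley_dic_integral_iff {A : Type*} [CommGroup A] [Fintype A]
    (hA : Even (Fintype.card A)) (hexp : 3 ≤ Monoid.exponent A)
    (y : A) (hy : y * y = 1) (hy1 : y ≠ 1)
    (S : Set (Dic A y hy)) (S₁ S₂ : Set A)
    (hS : S = Dic.ofA '' S₁ ∪ (fun a => Dic.x A y hy * Dic.ofA a) '' S₂)
    (h1S : (1 : Dic A y hy) ∉ S) (hSinv : S⁻¹ = S) :
    IsIntegralGraph (cayley S) ↔
      InBoolAlg A S₁ ∧
        ∀ π : A →* ℂ, (∃ a : A, π (a * a) ≠ 1) →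
          ∃ α : ℤ, (∑ s ∈ S₂.toFinset, π s) * (∑ s ∈ (S₂⁻¹).toFinset, π s) = (α : ℂ) ^ 2 := by
  constructor
  · intro hInt
    constructor
    · exact bm_hard (fun π => (forward_master hS h1S hSinv hInt π).1)
    · intro π _
      obtain ⟨α, hα⟩ := (forward_master hS h1S hSinv hInt π).2
      refine ⟨α, ?_⟩
      rw [sum_inv_S₂ (S₂ := S₂) π]
      exact hα
  · rintro ⟨hBA, hα⟩ μ hμ
    rw [spec_iff] at hμ
    obtain ⟨v, hv0, hv⟩ := hμ
    obtain ⟨π, hπeq⟩ := eigen_pair_exists hS h1S hSinv (μ : ℂ) v hv0 hv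
    obtain ⟨z, hz⟩ := bm_easy hBA π
    have key : ∃ β : ℤ,
        (∑ a ∈ S₂.toFinset, π a) * (∑ a ∈ S₂.toFinset, π a⁻¹) = (β : ℂ) ^ 2 := by
      by_cases hker : ∀ a : A, π (a * a) = 1
      · have hpm : ∀ a : A, π a = 1 ∨ π a = -1 := fun a =>
          mul_self_eq_one_iff.mp (by rw [← map_mul]; exact hker a)
        have hne : ∀ a : A, π a ≠ 0 := by
          intro a
          rcases hpm a with h | h <;> rw [h] <;> norm_num
        have hinv : ∀ a : A, π a⁻¹ = π a := by
          intro a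
          have h1 : π a * π a⁻¹ = 1 := by rw [← map_mul, mul_inv_cancel, map_one]
          have h2 : π a * π a = 1 := by rw [← map_mul]; exact hker a
          exact mul_left_cancel₀ (hne a) (h1.trans h2.symm)
        refine ⟨∑ a ∈ S₂.toFinset, (if π a = 1 then (1 : ℤ) else -1), ?_⟩
        have hqβ : ∑ a ∈ S₂.toFinset, π a
            = ((∑ a ∈ S₂.toFinset, (if π a = 1 then (1 : ℤ) else -1) : ℤ) : ℂ) := by
          push_cast
          apply Finset.sum_congr rfl
          intro a _
          rcases hpm a with h | h
          · simp [h]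
          · rw [h]; norm_num
        rw [Finset.sum_congr rfl (fun a (_ : a ∈ S₂.toFinset) => hinv a), hqβ]
        ring
      · push_neg at hker
        obtain ⟨a₀, ha₀⟩ := hker
        obtain ⟨β, hβ⟩ := hα π ⟨a₀, ha₀⟩
        refine ⟨β, ?_⟩
        rw [← sum_inv_S₂ (S₂ := S₂) π]
        exact hβ
    obtain ⟨β, hβeq⟩ := key
    rw [hz, hβeq] at hπeq
    have hfac : ((μ : ℂ) - z - β) * ((μ : ℂ) - z + β) = 0 := by linear_combination hπeq
    rcases mul_eq_zero.mp hfac with h | h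
    · refine ⟨z + β, ?_⟩
      have hc : (μ : ℂ) = ((z + β : ℤ) : ℂ) := by push_cast; linear_combination h
      exact_mod_cast hc.symm
    · refine ⟨z - β, ?_⟩
      have hc : (μ : ℂ) = ((z - β : ℤ) : ℂ) := by push_cast; linear_combination h
      exact_mod_cast hc.symm
end

section
/- For i = 1, 2, let πᵢ : A → ℂ* be a one-dimensional representation of A with A² ⊄ ker(πᵢ). Then the representations R_{π₁} and R_{π₂} of Dic(A,y) are equivalent if and only if π₁ = π₂ or π₁ = conj(π₂) (the complex-conjugate representation). -/
open scoped Classical Pointwise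

lemma pi_inv_mul {A : Type*} [CommGroup A] (π : A →* ℂ) (a : A) : π a * π a⁻¹ = 1 := by
  rw [← map_mul, mul_inv_cancel, map_one]

lemma pi_ne_zero {A : Type*} [CommGroup A] (π : A →* ℂ) (a : A) : π a ≠ 0 := by
  intro h
  have h1 := pi_inv_mul π a
  rw [h, zero_mul] at h1
  exact zero_ne_one h1

lemma conjHom_apply {A : Type*} [CommGroup A] [Fintype A] (π : A →* ℂ) (a : A) :
    conjHom π a = π a⁻¹ := by
  have hn : π a ^ Fintype.card A = 1 := by rw [← map_pow, pow_card_eq_one, map_one]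
  have hnorm : ‖π a‖ = 1 :=
    Complex.norm_eq_one_of_pow_eq_one hn Fintype.card_ne_zero
  have h2 : (π a)⁻¹ = conjHom π a := Complex.inv_eq_conj hnorm
  rw [← h2]
  exact inv_eq_of_mul_eq_one_right (pi_inv_mul π a)

/-- Lemma 3.3: for one-dimensional representations `π₁, π₂ : A → ℂ*` with
`A² ⊄ ker πᵢ`, the representations `R_{π₁}` and `R_{π₂}` of `Dic(A,y)` are equivalent iff
`π₁ = π₂` or `π₁ = conj(π₂)`. -/
theorem Rpi_equiv_iff {A : Type*} [CommGroup A] [Fintype A]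
    (hA : Even (Fintype.card A)) (hexp : 3 ≤ Monoid.exponent A)
    (y : A) (hy : y * y = 1) (hy1 : y ≠ 1)
    (π₁ π₂ : A →* ℂ)
    (h₁ : ∃ a : A, π₁ (a * a) ≠ 1) (h₂ : ∃ a : A, π₂ (a * a) ≠ 1) :
    (∃ T : Matrix (Fin 2) (Fin 2) ℂ, IsUnit T ∧
        ∀ g : Dic A y hy, T * Rpi π₁ g = Rpi π₂ g * T) ↔
      π₁ = π₂ ∨ π₁ = conjHom π₂ := by
  constructor
  · rintro ⟨T, hTu, hT⟩
    have e00 : ∀ a : A, T 0 0 * π₁ a = π₂ a * T 0 0 := by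
      intro a
      have h := congrFun (congrFun (hT ⟨false, a⟩) 0) 0
      simpa [Rpi, Matrix.mul_apply, Fin.sum_univ_two] using h
    have e10 : ∀ a : A, T 1 0 * π₁ a = π₂ a⁻¹ * T 1 0 := by
      intro a
      have h := congrFun (congrFun (hT ⟨false, a⟩) 1) 0
      simpa [Rpi, Matrix.mul_apply, Fin.sum_univ_two] using h
    have hs : T 1 1 = T 0 0 := by
      have h := congrFun (congrFun (hT ⟨true, 1⟩) 1) 0
      simpa [Rpi, Matrix.mul_apply, Fin.sum_univ_two] using h
    have hq : T 1 0 * π₁ y = T 0 1 := by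
      have h := congrFun (congrFun (hT ⟨true, 1⟩) 1) 1
      simpa [Rpi, Matrix.mul_apply, Fin.sum_univ_two] using h
    by_cases hp : T 0 0 = 0
    · by_cases hr : T 1 0 = 0
      · exfalso
        have hdet := (Matrix.isUnit_iff_isUnit_det T).mp hTu
        rw [Matrix.det_fin_two] at hdet
        rw [hp, hs, hp, ← hq, hr] at hdet
        simp at hdet
      · right
        ext a
        rw [conjHom_apply]
        have h := e10 a
        rw [mul_comm (π₂ a⁻¹)] at h
        exact mul_left_cancel₀ hr h
    · left
      ext a
      have h := e00 a
      rw [mul_comm (π₂ a)] at h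
      exact mul_left_cancel₀ hp h
  · rintro (rfl | rfl)
    · exact ⟨1, isUnit_one, fun g => by rw [one_mul, mul_one]⟩
    · refine ⟨!![0, π₂ y; 1, 0], ?_, ?_⟩
      · rw [Matrix.isUnit_iff_isUnit_det, Matrix.det_fin_two_of]
        simpa [isUnit_iff_ne_zero] using pi_ne_zero π₂ y
      · rintro ⟨t, a⟩
        have hyy : π₂ y⁻¹ = π₂ y := by rw [inv_eq_of_mul_eq_one_right hy]
        ext i j
        fin_cases i <;> fin_cases j <;> cases t <;>
          simp [Rpi, conjHom_apply, Matrix.mul_apply, Fin.sum_univ_two, hyy] <;> ring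
end

section
/- Write |A/A²| = 2ⁿ. Then Dic(A,y) has exactly 2^{n+1} pairwise inequivalent one-dimensional complex representations, exactly (|A| − 2ⁿ)/2 pairwise inequivalent irreducible two-dimensional complex representations, and no irreducible complex representation of dimension at least 3. -/
open scoped Classical Pointwise

/-- A monoid-hom `ρ : G →* M₂(ℂ)` (viewed as a two-dimensional representation) is irreducible
if the only subspaces of `ℂ²` invariant under all `ρ g` are `0` and `ℂ²`. -/
def IsIrredMatRep {G : Type*} [Group G] (ρ : G →* Matrix (Fin 2) (Fin 2) ℂ) : Prop :=
  ∀ W : Submodule ℂ (Fin 2 → ℂ), (∀ g : G, ∀ v ∈ W, (ρ g).mulVec v ∈ W) → W = ⊥ ∨ W = ⊤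

/-- Two matrix representations are equivalent if they are intertwined by an invertible matrix. -/
def MatRepEquiv {G : Type*} [Group G] (ρ₁ ρ₂ : G →* Matrix (Fin 2) (Fin 2) ℂ) : Prop :=
  ∃ T : Matrix (Fin 2) (Fin 2) ℂ, IsUnit T ∧ ∀ g : G, T * ρ₁ g = ρ₂ g * T

/-- The type of irreducible two-dimensional complex matrix representations of `G`. -/
def IrredTwoDimRep (G : Type*) [Group G] : Type _ :=
  {ρ : G →* Matrix (Fin 2) (Fin 2) ℂ // IsIrredMatRep ρ}

section Basics

namespace Dic
variable {A : Type*} [CommGroup A] {y : A} {hy : y * y = 1}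

/-- The embedding of `A` as a monoid hom. -/
def ofAHom : A →* Dic A y hy where
  toFun a := ⟨false, a⟩
  map_one' := rfl
  map_mul' a b := by ext <;> simp

@[simp] lemma ofAHom_t (a : A) : (ofAHom (hy := hy) a).t = false := rfl
@[simp] lemma ofAHom_a (a : A) : (ofAHom (hy := hy) a).a = a := rfl

lemma x_mul_ofA (a : A) : x A y hy * ofAHom a = ⟨true, a⟩ := by
  ext <;> simp [x, ofAHom]

lemma ofA_mul_x (a : A) : ofAHom a * x A y hy = x A y hy * ofAHom a⁻¹ := by
  ext <;> simp [x, ofAHom]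

lemma x_sq : x A y hy * x A y hy = ofAHom y := by
  ext <;> simp [x, ofAHom]

lemma eq_of_t_false (g : Dic A y hy) (h : g.t = false) : g = ofAHom g.a := by
  ext <;> simp [h, ofAHom]

lemma eq_of_t_true (g : Dic A y hy) (h : g.t = true) : g = x A y hy * ofAHom g.a := by
  ext <;> simp [h, x_mul_ofA]

lemma ofA_comm (a b : A) : ofAHom (hy := hy) a * ofAHom b = ofAHom b * ofAHom a := by
  rw [← map_mul, ← map_mul, mul_comm]

end Dic

end Basics

section Part3

open Dic Module Submodule

variable {A : Type*} [CommGroup A] {y : A} {hy : y * y = 1}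

theorem dic_dim_le_two (V : Type) [AddCommGroup V] [Module ℂ V] [FiniteDimensional ℂ V]
    (ρ : Representation ℂ (Dic A y hy) V)
    (hirr : ∀ W : Submodule ℂ V, (∀ g : Dic A y hy, ∀ v ∈ W, ρ g v ∈ W) → W = ⊥ ∨ W = ⊤) :
    Module.finrank ℂ V ≤ 2 := by
  by_cases hV : Subsingleton V
  · simpa [Module.finrank_zero_of_subsingleton] using by norm_num
  have : Nontrivial V := not_subsingleton_iff_nontrivial.mp hV
  -- commuting of the A-action
  have hcomm : ∀ a b : A, ∀ v : V,
      ρ (ofAHom a) (ρ (ofAHom b) v) = ρ (ofAHom b) (ρ (ofAHom a) v) := by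
    intro a b v
    rw [← Module.End.mul_apply, ← map_mul, ofA_comm, map_mul, Module.End.mul_apply]
  set Inv : Submodule ℂ V → Prop := fun W => ∀ a : A, ∀ v ∈ W, ρ (ofAHom a) v ∈ W with hInv
  set S : Set ℕ := {d : ℕ | ∃ W : Submodule ℂ V, Inv W ∧ W ≠ ⊥ ∧ finrank ℂ W = d} with hS
  have hSne : S.Nonempty := ⟨finrank ℂ (⊤ : Submodule ℂ V), ⊤, fun a v _ => trivial,
    by simp, rfl⟩
  obtain ⟨W, hWinv, hWne, hWrank⟩ : ∃ W : Submodule ℂ V, Inv W ∧ W ≠ ⊥ ∧ finrank ℂ W = sInf S :=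
    Nat.sInf_mem hSne
  -- every ρ(a) acts as a scalar on W
  have hscal : ∀ a : A, ∃ c : ℂ, ∀ v ∈ W, ρ (ofAHom a) v = c • v := by
    intro a
    have hres : ∀ v ∈ W, ρ (ofAHom a) v ∈ W := hWinv a
    have : Nontrivial W := Submodule.nontrivial_iff_ne_bot.mpr hWne
    obtain ⟨c, hc⟩ := Module.End.exists_eigenvalue ((ρ (ofAHom a)).restrict hres)
    obtain ⟨u, hu⟩ := hc.exists_hasEigenvector
    refine ⟨c, ?_⟩
    set W' : Submodule ℂ V := W ⊓ LinearMap.ker (ρ (ofAHom a) - c • LinearMap.id) with hW'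
    have hmem : ∀ v : V, v ∈ W' ↔ v ∈ W ∧ ρ (ofAHom a) v = c • v := by
      intro v
      simp [hW', LinearMap.mem_ker, LinearMap.sub_apply, sub_eq_zero]
    have hW'inv : Inv W' := by
      intro b v hv
      rw [hmem] at hv ⊢
      refine ⟨hWinv b v hv.1, ?_⟩
      rw [hcomm a b, hv.2, map_smul]
    have hW'ne : W' ≠ ⊥ := by
      intro h
      have hu1 : (u : V) ∈ W' := by
        rw [hmem]
        refine ⟨u.2, ?_⟩
        have h2 : ((ρ (ofAHom a)).restrict hres) u = c • u := hu.apply_eq_smul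
        have := congrArg Subtype.val h2
        simpa [LinearMap.restrict_apply] using this
      rw [h] at hu1
      exact hu.2 (by exact_mod_cast Subtype.ext (by simpa using hu1))
    have hle : W' ≤ W := inf_le_left
    have : finrank ℂ W ≤ finrank ℂ W' := by
      rw [hWrank]
      exact Nat.sInf_le ⟨W', hW'inv, hW'ne, rfl⟩
    have hEq : W' = W := Submodule.eq_of_le_of_finrank_le hle this
    intro v hv
    have : v ∈ W' := hEq.symm ▸ hv
    exact ((hmem v).1 this).2
  obtain ⟨v₀, hv₀W, hv₀⟩ := Submodule.exists_mem_ne_zero_of_ne_bot hWne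
  set w₀ : V := ρ (x A y hy) v₀ with hw₀
  -- basic facts
  obtain ⟨cy, hcy⟩ := hscal y
  have hxw : ρ (x A y hy) w₀ = cy • v₀ := by
    rw [hw₀, ← Module.End.mul_apply, ← map_mul, x_sq, hcy v₀ hv₀W]
  have haw : ∀ a : A, ∀ c' : ℂ, (∀ v ∈ W, ρ (ofAHom a⁻¹) v = c' • v) →
      ρ (ofAHom a) w₀ = c' • w₀ := by
    intro a c' hc'
    rw [hw₀, ← Module.End.mul_apply, ← map_mul, ofA_mul_x, map_mul, Module.End.mul_apply,
      hc' v₀ hv₀W, map_smul]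
  set Z : Submodule ℂ V := span ℂ {v₀, w₀} with hZ
  have hsubv : v₀ ∈ Z := Submodule.subset_span (by simp)
  have hsubw : w₀ ∈ Z := Submodule.subset_span (by simp)
  have hZx : ∀ v ∈ Z, ρ (x A y hy) v ∈ Z := by
    intro v hv
    induction hv using Submodule.span_induction with
    | mem v h =>
      rcases h with h | h
      · rw [h]; exact hsubw
      · rw [h, hxw]; exact Z.smul_mem _ hsubv
    | zero => simpa using Z.zero_mem
    | add u v _ _ hu hv => rw [map_add]; exact Z.add_mem hu hv
    | smul k u _ hu => rw [map_smul]; exact Z.smul_mem k hu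
  have hZa : ∀ a : A, ∀ v ∈ Z, ρ (ofAHom a) v ∈ Z := by
    intro a v hv
    induction hv using Submodule.span_induction with
    | mem v h =>
      rcases h with h | h
      · obtain ⟨c, hc⟩ := hscal a
        rw [h, hc v₀ hv₀W]; exact Z.smul_mem _ hsubv
      · obtain ⟨c', hc'⟩ := hscal a⁻¹
        rw [h, haw a c' hc']; exact Z.smul_mem _ hsubw
    | zero => simpa using Z.zero_mem
    | add u v _ _ hu hv => rw [map_add]; exact Z.add_mem hu hv
    | smul k u _ hu => rw [map_smul]; exact Z.smul_mem k hu
  have hZinv : ∀ g : Dic A y hy, ∀ v ∈ Z, ρ g v ∈ Z := by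
    intro g v hv
    cases hgt : g.t
    · rw [eq_of_t_false g hgt]; exact hZa g.a v hv
    · rw [eq_of_t_true g hgt, map_mul, Module.End.mul_apply]
      exact hZx _ (hZa g.a v hv)
  have hZtop : Z = ⊤ := by
    rcases hirr Z hZinv with h | h
    · exact absurd (h ▸ hsubv) (by simpa using hv₀)
    · exact h
  have h1 : finrank ℂ V = finrank ℂ Z := by
    rw [hZtop]; exact (finrank_top ℂ V).symm
  rw [h1, hZ]
  calc finrank ℂ (span ℂ ({v₀, w₀} : Set V)) ≤ ({v₀, w₀} : Set V).toFinset.card :=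
        finrank_span_le_card _
    _ ≤ 2 := by
        rw [Set.toFinset_insert, Set.toFinset_singleton]
        exact le_trans (Finset.card_insert_le _ _) (by simp)

end Part3
section Part1

open Dic

/-- Monoid homs from a group into `ℂ` are the same as homs into `ℂˣ`. -/
def homUnitsEquiv (G : Type*) [Group G] : (G →* ℂ) ≃ (G →* ℂˣ) where
  toFun f := f.toHomUnits
  invFun f := (Units.coeHom ℂ).comp f
  left_inv f := by ext g; rfl
  right_inv f := by ext g; rfl

lemma card_homCunits (G : Type*) [CommGroup G] [Finite G] :
    Nat.card (G →* ℂˣ) = Nat.card G := by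
  haveI : NeZero ((Monoid.exponent G : ℂ)) :=
    ⟨Nat.cast_ne_zero.mpr Monoid.exponent_ne_zero_of_finite⟩
  obtain ⟨e⟩ := CommGroup.monoidHom_mulEquiv_of_hasEnoughRootsOfUnity G ℂ
  rw [Nat.card_congr e.toEquiv]

lemma card_homC (G : Type*) [CommGroup G] [Finite G] :
    Nat.card (G →* ℂ) = Nat.card G := by
  rw [Nat.card_congr (homUnitsEquiv G), card_homCunits]

/-- canonical square root of values `v` with `v * v = 1`. -/
noncomputable def csqrt (v : ℂ) : ℂ := if v = 1 then 1 else Complex.I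

lemma csqrt_mul_self {v : ℂ} (hv : v * v = 1) : csqrt v * csqrt v = v := by
  by_cases h : v = 1
  · subst h; simp [csqrt]
  · have hv1 : v = -1 := by
      have h0 : (v - 1) * (v + 1) = 0 := by linear_combination hv
      rcases mul_eq_zero.mp h0 with h' | h'
      · exact absurd (by linear_combination h') h
      · linear_combination h'
    rw [csqrt, if_neg h, Complex.I_mul_I, hv1]

lemma csqrt_ne_zero {v : ℂ} (hv : v * v = 1) : csqrt v ≠ 0 := by
  intro h
  have h2 := csqrt_mul_self hv
  rw [h, mul_zero] at h2
  rw [← h2, zero_mul] at hv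
  exact zero_ne_one hv

lemma csqrt_cases {v c : ℂ} (hv : v * v = 1) (hc : c * c = v) :
    c = csqrt v ∨ c = -csqrt v := by
  have h0 : (c - csqrt v) * (c + csqrt v) = 0 := by
    have := csqrt_mul_self hv
    linear_combination hc - this
  rcases mul_eq_zero.mp h0 with h | h
  · left; linear_combination h
  · right; linear_combination h

lemma neg_csqrt_ne {v : ℂ} (hv : v * v = 1) : -csqrt v ≠ csqrt v := by
  intro h
  have : (2 : ℂ) * csqrt v = 0 := by linear_combination -h
  rcases mul_eq_zero.mp this with h' | h'
  · norm_num at h'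
  · exact csqrt_ne_zero hv h'

namespace Dic
variable {A : Type*} [CommGroup A] {y : A} {hy : y * y = 1}

/-- homs `Dic A y hy →* ℂ` are pairs `(π, c)` with `π` of order dividing 2 and `c * c = π y`. -/
noncomputable def dicHomEquiv :
    (Dic A y hy →* ℂ) ≃
      {p : (A →* ℂ) × ℂ // (∀ a, p.1 a * p.1 a = 1) ∧ p.2 * p.2 = p.1 y} where
  toFun ρ := by
    refine ⟨(ρ.comp ofAHom, ρ (x A y hy)), ?_, ?_⟩
    · intro a
      have hxne : ρ (x A y hy) ≠ 0 := by
        intro h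
        have : ρ (x A y hy) * ρ ((x A y hy)⁻¹) = 1 := by rw [← map_mul, mul_inv_cancel, map_one]
        rw [h, zero_mul] at this
        exact zero_ne_one this
      have h1 : ρ (ofAHom a) * ρ (x A y hy) = ρ (ofAHom a⁻¹) * ρ (x A y hy) := by
        rw [← map_mul, ofA_mul_x, map_mul, mul_comm]
      have h2 : ρ (ofAHom a) = ρ (ofAHom a⁻¹) := mul_right_cancel₀ hxne h1
      show ρ (ofAHom a) * ρ (ofAHom a) = 1
      rw (occs := .pos [2]) [h2]
      rw [← map_mul, ← map_mul, mul_inv_cancel, map_one, map_one]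
    · show ρ (x A y hy) * ρ (x A y hy) = ρ (ofAHom y)
      rw [← map_mul, x_sq]
  invFun p :=
    { toFun := fun g => (if g.t then p.1.2 else 1) * p.1.1 g.a
      map_one' := by
        show (if (1 : Dic A y hy).t then p.1.2 else 1) * p.1.1 (1 : Dic A y hy).a = 1
        rw [Dic.one_t, Dic.one_a, if_neg Bool.false_ne_true, one_mul]
        exact map_one p.1.1
      map_mul' := by
        obtain ⟨⟨π, c⟩, hπ, hc⟩ := p
        have hπne : ∀ a : A, π a ≠ 0 := by
          intro a h
          have := hπ a; rw [h, zero_mul] at this; exact zero_ne_one this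
        have hinv : ∀ a : A, π a⁻¹ = π a := by
          intro a
          have h1 : π a * π a⁻¹ = 1 := by rw [← map_mul, mul_inv_cancel, map_one]
          exact mul_left_cancel₀ (hπne a) (by rw [h1, hπ a])
        have hc' : c * c = π y := hc
        intro g h
        cases hgt : g.t <;> cases hht : h.t <;>
          simp only [Dic.mul_t, Dic.mul_a, hgt, hht, Bool.xor_false, Bool.xor_true,
            Bool.false_xor, Bool.true_xor, Bool.not_true, Bool.not_false, Bool.false_and,
            Bool.true_and, Bool.and_false, Bool.and_true, Bool.false_eq_true, if_true,
            if_false, map_mul, map_one, mul_one, one_mul, hinv]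
        · ring
        · ring
        · linear_combination π g.a * π h.a * hc'.symm }
  left_inv := by
    intro ρ
    ext g
    show (if g.t then ρ (x A y hy) else 1) * ρ (ofAHom g.a) = ρ g
    cases hgt : g.t
    · rw [if_neg (by simp), one_mul, ← eq_of_t_false g hgt]
    · rw [if_pos rfl, ← map_mul, ← eq_of_t_true g hgt]
  right_inv := by
    rintro ⟨⟨π, c⟩, hπ, hc⟩
    refine Subtype.ext (Prod.ext ?_ ?_)
    · ext a; show (if False then c else 1) * π a = π a
      simp
    · show (if (x A y hy).t then c else 1) * π (x A y hy).a = c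
      simp [x]

/-- split off the choice of `c`. -/
noncomputable def dicHomEquiv2 :
    {p : (A →* ℂ) × ℂ // (∀ a, p.1 a * p.1 a = 1) ∧ p.2 * p.2 = p.1 y} ≃
      {π : A →* ℂ // ∀ a, π a * π a = 1} × Bool where
  toFun p := (⟨p.1.1, p.2.1⟩, if p.1.2 = csqrt (p.1.1 y) then true else false)
  invFun q := ⟨(q.1.1, if q.2 then csqrt (q.1.1 y) else -csqrt (q.1.1 y)), q.1.2, by
    rcases q with ⟨⟨π, hπ⟩, b⟩
    cases b <;> simp only [if_true, if_false, Bool.false_eq_true, neg_mul_neg] <;>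
      exact csqrt_mul_self (hπ y)⟩
  left_inv := by
    rintro ⟨⟨π, c⟩, hπ, hc⟩
    refine Subtype.ext (Prod.ext rfl ?_)
    by_cases h : c = csqrt (π y)
    · simp [h]
    · have := csqrt_cases (hπ y) hc
      rcases this with h' | h'
      · exact absurd h' h
      · simp only [h, if_false, Bool.false_eq_true]
        exact h'.symm
  right_inv := by
    rintro ⟨⟨π, hπ⟩, b⟩
    cases b
    · have := neg_csqrt_ne (hπ y)
      simp [this]
    · simp

/-- characters of order dividing 2 are characters of the quotient `A ⧸ A²`. -/
noncomputable def sqOneEquiv :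
    {π : A →* ℂˣ // ∀ a, π a * π a = 1} ≃ (A ⧸ (powMonoidHom 2 : A →* A).range →* ℂˣ) where
  toFun π := QuotientGroup.lift _ π.1 (by
    rintro g ⟨a, rfl⟩
    show π.1 (powMonoidHom 2 a) = 1
    have : powMonoidHom 2 a = a * a := by simp [powMonoidHom, pow_two]
    rw [this, map_mul, π.2 a])
  invFun φ := ⟨φ.comp (QuotientGroup.mk' _), by
    intro a
    show φ (QuotientGroup.mk a) * φ (QuotientGroup.mk a) = 1
    rw [← map_mul]
    have : (QuotientGroup.mk (a * a) : A ⧸ (powMonoidHom 2 : A →* A).range) = 1 := by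
      rw [QuotientGroup.eq_one_iff]
      exact ⟨a, by simp [powMonoidHom, pow_two]⟩
    rw [← QuotientGroup.mk_mul, this, map_one]⟩
  left_inv π := by
    refine Subtype.ext ?_
    ext a
    rfl
  right_inv φ := by
    refine MonoidHom.ext fun q => ?_
    induction q using QuotientGroup.induction_on with
    | H a => rfl

lemma card_sqOne (n : ℕ) (hn : Nat.card (A ⧸ (powMonoidHom 2 : A →* A).range) = 2 ^ n)
    [Finite A] :
    Nat.card {π : A →* ℂ // ∀ a, π a * π a = 1} = 2 ^ n := by
  have e1 : {π : A →* ℂ // ∀ a, π a * π a = 1} ≃ {π : A →* ℂˣ // ∀ a, π a * π a = 1} := by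
    refine (homUnitsEquiv A).subtypeEquiv ?_
    intro π
    constructor
    · intro h a
      exact Units.ext (by push_cast [Units.val_mul]; exact h a)
    · intro h a
      have := congrArg (Units.val) (h a)
      push_cast at this
      exact this
  rw [Nat.card_congr e1, Nat.card_congr sqOneEquiv, card_homCunits, hn]

lemma card_dicHom [Finite A] (n : ℕ)
    (hn : Nat.card (A ⧸ (powMonoidHom 2 : A →* A).range) = 2 ^ n) :
    Nat.card (Dic A y hy →* ℂ) = 2 ^ (n + 1) := by
  rw [Nat.card_congr (dicHomEquiv (hy := hy)), Nat.card_congr dicHomEquiv2, Nat.card_prod,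
    card_sqOne n hn]
  simp [pow_succ]

end Dic

end Part1
section Part2a

namespace Dic
variable {A : Type*} [CommGroup A] {y : A} {hy : y * y = 1}

lemma pi_mul_inv (π : A →* ℂ) (a : A) : π a * π a⁻¹ = 1 := by
  rw [← map_mul, mul_inv_cancel, map_one]

lemma pi_ne_zero (π : A →* ℂ) (a : A) : π a ≠ 0 := by
  intro h
  have h2 := pi_mul_inv π a
  rw [h, zero_mul] at h2
  exact zero_ne_one h2

lemma Rpi_false (π : A →* ℂ) (a : A) :
    Rpi (hy := hy) π ⟨false, a⟩ = !![π a, 0; 0, π a⁻¹] := by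
  simp [Rpi]

lemma Rpi_true (π : A →* ℂ) (a : A) :
    Rpi (hy := hy) π ⟨true, a⟩ = !![0, π y * π a⁻¹; π a, 0] := by
  simp [Rpi, Matrix.mul_fin_two]

/-- The representation `R_π` as a monoid hom. -/
noncomputable def Rhom (π : A →* ℂ) : Dic A y hy →* Matrix (Fin 2) (Fin 2) ℂ where
  toFun := Rpi π
  map_one' := by
    show Rpi (hy := hy) π 1 = 1
    have h : (1 : Dic A y hy) = ⟨false, 1⟩ := rfl
    rw [h, Rpi_false, map_one, inv_one, map_one, Matrix.one_fin_two]
  map_mul' := by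
    have hyv : y⁻¹ = y := inv_eq_of_mul_eq_one_right hy
    intro g h
    show Rpi (hy := hy) π (g * h) = Rpi π g * Rpi π h
    rcases g with ⟨gt, ga⟩
    rcases h with ⟨ht, ha⟩
    cases gt <;> cases ht
    · rw [show ((⟨false, ga⟩ : Dic A y hy) * ⟨false, ha⟩) = ⟨false, ga * ha⟩ by ext <;> simp,
        Rpi_false, Rpi_false, Rpi_false, Matrix.mul_fin_two]
      ext i j
      fin_cases i <;> fin_cases j <;> simp [map_mul, mul_inv] <;> ring
    · rw [show ((⟨false, ga⟩ : Dic A y hy) * ⟨true, ha⟩) = ⟨true, ga⁻¹ * ha⟩ by ext <;> simp,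
        Rpi_true, Rpi_false, Rpi_true, Matrix.mul_fin_two]
      ext i j
      fin_cases i <;> fin_cases j <;> simp [map_mul, mul_inv, inv_inv] <;> ring
    · rw [show ((⟨true, ga⟩ : Dic A y hy) * ⟨false, ha⟩) = ⟨true, ga * ha⟩ by ext <;> simp,
        Rpi_true, Rpi_true, Rpi_false, Matrix.mul_fin_two]
      ext i j
      fin_cases i <;> fin_cases j <;> simp [map_mul, mul_inv, inv_inv] <;> ring
    · rw [show ((⟨true, ga⟩ : Dic A y hy) * ⟨true, ha⟩) = ⟨false, ga⁻¹ * ha * y⟩ by ext <;> simp,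
        Rpi_false, Rpi_true, Rpi_true, Matrix.mul_fin_two]
      ext i j
      fin_cases i <;> fin_cases j <;> simp [map_mul, mul_inv, inv_inv, hyv] <;> ring

lemma Rhom_ofA (π : A →* ℂ) (a : A) :
    Rhom (hy := hy) π (ofAHom a) = !![π a, 0; 0, π a⁻¹] := Rpi_false π a

lemma Rhom_mk_true (π : A →* ℂ) (a : A) :
    Rhom (hy := hy) π (⟨true, a⟩ : Dic A y hy) = !![0, π y * π a⁻¹; π a, 0] := Rpi_true π a

lemma Rhom_x (π : A →* ℂ) : Rhom (hy := hy) π (x A y hy) = !![0, π y; 1, 0] := by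
  have h : Rhom (hy := hy) π (x A y hy) = !![0, π y * π (1 : A)⁻¹; π 1, 0] := Rpi_true π 1
  rw [h, inv_one, map_one, mul_one]

lemma mulVec_fin_two (M : Matrix (Fin 2) (Fin 2) ℂ) (u : Fin 2 → ℂ) :
    M.mulVec u = ![M 0 0 * u 0 + M 0 1 * u 1, M 1 0 * u 0 + M 1 1 * u 1] := by
  funext i
  fin_cases i <;> simp [Matrix.mulVec, dotProduct, Fin.sum_univ_two]

lemma matrix_ext_of_mulVec {M N : Matrix (Fin 2) (Fin 2) ℂ}
    (h : ∀ u, M.mulVec u = N.mulVec u) : M = N := by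
  ext i j
  have h2 := congrFun (h (Pi.single j 1)) i
  rw [Matrix.mulVec_single, Matrix.mulVec_single] at h2
  simpa using h2

lemma scalar_mulVec (c : ℂ) (u : Fin 2 → ℂ) :
    (c • (1 : Matrix (Fin 2) (Fin 2) ℂ)).mulVec u = c • u := by
  rw [Matrix.smul_mulVec, Matrix.one_mulVec]

lemma vec_eq_comb (u : Fin 2 → ℂ) : u = u 0 • ![1, 0] + u 1 • ![0, 1] := by
  funext i
  fin_cases i <;> simp

lemma vec_comp_ne (v : Fin 2 → ℂ) (hv : v ≠ 0) : v 0 ≠ 0 ∨ v 1 ≠ 0 := by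
  by_contra h
  push_neg at h
  apply hv
  funext i
  fin_cases i <;> simp [h.1, h.2]

/-- irreducibility of `R_π` when `π² ≠ 1`. -/
lemma Rhom_irred (π : A →* ℂ) (hπ : ∃ a, π a * π a ≠ 1) :
    IsIrredMatRep (Rhom (hy := hy) π) := by
  intro W hW
  by_cases hbot : W = ⊥
  · exact Or.inl hbot
  right
  obtain ⟨a₀, ha₀⟩ := hπ
  obtain ⟨v, hvW, hv0⟩ := Submodule.exists_mem_ne_zero_of_ne_bot hbot
  have hyne : π y ≠ 0 := pi_ne_zero π y
  have hne : π a₀ - π a₀⁻¹ ≠ 0 := by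
    intro h
    apply ha₀
    rw [sub_eq_zero] at h
    calc π a₀ * π a₀ = π a₀ * π a₀⁻¹ := by rw [← h]
      _ = 1 := pi_mul_inv π a₀
  have hMv : (!![π a₀, 0; 0, π a₀⁻¹]).mulVec v ∈ W := by
    have h := hW (ofAHom a₀) v hvW
    rwa [Rhom_ofA] at h
  have hXe0 : (!![0, π y; 1, 0]).mulVec ![1, 0] = ![0, 1] := by
    rw [mulVec_fin_two]; norm_num
  have hXe1 : (!![0, π y; 1, 0]).mulVec ![0, 1] = π y • ![1, 0] := by
    rw [mulVec_fin_two]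
    funext i; fin_cases i <;> simp
  have key : (![1, 0] : Fin 2 → ℂ) ∈ W ∧ (![0, 1] : Fin 2 → ℂ) ∈ W := by
    have h1 : ((π a₀ - π a₀⁻¹) * v 0) • (![1, 0] : Fin 2 → ℂ) ∈ W := by
      have heq : (!![π a₀, 0; 0, π a₀⁻¹]).mulVec v - π a₀⁻¹ • v
          = ((π a₀ - π a₀⁻¹) * v 0) • ![1, 0] := by
        rw [mulVec_fin_two]
        funext i
        fin_cases i <;> simp <;> ring
      rw [← heq]
      exact W.sub_mem hMv (W.smul_mem _ hvW)
    have h2 : ((π a₀⁻¹ - π a₀) * v 1) • (![0, 1] : Fin 2 → ℂ) ∈ W := by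
      have heq : (!![π a₀, 0; 0, π a₀⁻¹]).mulVec v - π a₀ • v
          = ((π a₀⁻¹ - π a₀) * v 1) • ![0, 1] := by
        rw [mulVec_fin_two]
        funext i
        fin_cases i <;> simp <;> ring
      rw [← heq]
      exact W.sub_mem hMv (W.smul_mem _ hvW)
    rcases vec_comp_ne v hv0 with hv' | hv'
    · have he0 : (![1, 0] : Fin 2 → ℂ) ∈ W := by
        have hc : (π a₀ - π a₀⁻¹) * v 0 ≠ 0 := mul_ne_zero hne hv'
        have h3 := W.smul_mem ((π a₀ - π a₀⁻¹) * v 0)⁻¹ h1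
        rwa [smul_smul, inv_mul_cancel₀ hc, one_smul] at h3
      refine ⟨he0, ?_⟩
      have h4 := hW (x A y hy) _ he0
      rwa [Rhom_x, hXe0] at h4
    · have hne' : π a₀⁻¹ - π a₀ ≠ 0 := fun h => hne (by linear_combination -h)
      have he1 : (![0, 1] : Fin 2 → ℂ) ∈ W := by
        have hc : (π a₀⁻¹ - π a₀) * v 1 ≠ 0 := mul_ne_zero hne' hv'
        have h3 := W.smul_mem ((π a₀⁻¹ - π a₀) * v 1)⁻¹ h2
        rwa [smul_smul, inv_mul_cancel₀ hc, one_smul] at h3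
      refine ⟨?_, he1⟩
      have h4 := hW (x A y hy) _ he1
      rw [Rhom_x, hXe1] at h4
      have h5 := W.smul_mem (π y)⁻¹ h4
      rwa [smul_smul, inv_mul_cancel₀ hyne, one_smul] at h5
  rw [eq_top_iff]
  intro u _
  rw [vec_eq_comb u]
  exact W.add_mem (W.smul_mem _ key.1) (W.smul_mem _ key.2)

end Dic

end Part2a
section Part2b

lemma MatRepEquiv_refl {G : Type*} [Group G] (ρ : G →* Matrix (Fin 2) (Fin 2) ℂ) :
    MatRepEquiv ρ ρ := ⟨1, isUnit_one, fun g => by rw [one_mul, mul_one]⟩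

lemma MatRepEquiv_symm {G : Type*} [Group G] {ρ₁ ρ₂ : G →* Matrix (Fin 2) (Fin 2) ℂ}
    (h : MatRepEquiv ρ₁ ρ₂) : MatRepEquiv ρ₂ ρ₁ := by
  obtain ⟨T, hT, hint⟩ := h
  obtain ⟨U, rfl⟩ := hT
  set Um : Matrix (Fin 2) (Fin 2) ℂ := ↑U with hUm
  set Vm : Matrix (Fin 2) (Fin 2) ℂ := ↑U⁻¹ with hVm
  have hUV : Um * Vm = 1 := U.mul_inv
  have hVU : Vm * Um = 1 := U.inv_mul
  refine ⟨Vm, Units.isUnit U⁻¹, fun g => ?_⟩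
  have h2 : ρ₂ g * Um = Um * ρ₁ g := (hint g).symm
  calc Vm * ρ₂ g
      = Vm * (ρ₂ g * Um * Vm) := by rw [mul_assoc (ρ₂ g), hUV, mul_one]
    _ = Vm * (Um * ρ₁ g * Vm) := by rw [h2]
    _ = (Vm * Um) * (ρ₁ g * Vm) := by rw [mul_assoc Um, ← mul_assoc Vm, ← mul_assoc]
    _ = ρ₁ g * Vm := by rw [hVU, one_mul]

lemma MatRepEquiv_trans {G : Type*} [Group G] {ρ₁ ρ₂ ρ₃ : G →* Matrix (Fin 2) (Fin 2) ℂ}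
    (h : MatRepEquiv ρ₁ ρ₂) (h' : MatRepEquiv ρ₂ ρ₃) : MatRepEquiv ρ₁ ρ₃ := by
  obtain ⟨T, hT, hint⟩ := h
  obtain ⟨S, hS, hint'⟩ := h'
  refine ⟨S * T, hS.mul hT, fun g => ?_⟩
  rw [mul_assoc, hint g, ← mul_assoc, hint' g, mul_assoc]

lemma MatRepEquiv_trace {G : Type*} [Group G] {ρ₁ ρ₂ : G →* Matrix (Fin 2) (Fin 2) ℂ}
    (h : MatRepEquiv ρ₁ ρ₂) (g : G) : (ρ₁ g).trace = (ρ₂ g).trace := by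
  obtain ⟨T, hT, hint⟩ := h
  obtain ⟨U, rfl⟩ := hT
  set Um : Matrix (Fin 2) (Fin 2) ℂ := ↑U with hUm
  set Vm : Matrix (Fin 2) (Fin 2) ℂ := ↑U⁻¹ with hVm
  have hUV : Um * Vm = 1 := U.mul_inv
  have hVU : Vm * Um = 1 := U.inv_mul
  have h1 : Um * ρ₁ g * Vm = ρ₂ g := by rw [hint g, mul_assoc, hUV, mul_one]
  rw [← h1, Matrix.trace_mul_comm, ← mul_assoc, hVU, one_mul]

namespace Dic
variable {A : Type*} [CommGroup A] {y : A} {hy : y * y = 1}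

lemma Rhom_equiv_inv (π : A →* ℂ) :
    MatRepEquiv (Rhom (hy := hy) π) (Rhom (hy := hy) (π.comp invMonoidHom)) := by
  have hyv : y⁻¹ = y := inv_eq_of_mul_eq_one_right hy
  refine ⟨!![0, π y; 1, 0], ?_, ?_⟩
  · rw [Matrix.isUnit_iff_isUnit_det, Matrix.det_fin_two_of]
    norm_num [isUnit_iff_ne_zero]
    exact pi_ne_zero π y
  · intro g
    cases hgt : g.t
    · rw [eq_of_t_false g hgt, Rhom_ofA, Rhom_ofA, Matrix.mul_fin_two, Matrix.mul_fin_two]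
      ext i j
      fin_cases i <;> fin_cases j <;>
        simp [MonoidHom.comp_apply, invMonoidHom_apply, inv_inv] <;> ring
    · rw [eq_of_t_true g hgt, x_mul_ofA, Rhom_mk_true, Rhom_mk_true, Matrix.mul_fin_two,
        Matrix.mul_fin_two]
      ext i j
      fin_cases i <;> fin_cases j <;>
        simp [MonoidHom.comp_apply, invMonoidHom_apply, inv_inv, hyv] <;> ring

lemma char_eq {π σ : A →* ℂ}
    (h : MatRepEquiv (Rhom (hy := hy) π) (Rhom (hy := hy) σ)) :
    σ = π ∨ σ = π.comp invMonoidHom := by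
  have htr : ∀ a : A, π a + π a⁻¹ = σ a + σ a⁻¹ := by
    intro a
    have h1 := MatRepEquiv_trace h (ofAHom a)
    rwa [Rhom_ofA, Rhom_ofA, Matrix.trace_fin_two_of, Matrix.trace_fin_two_of] at h1
  have key : ∀ a : A, σ a = π a ∨ σ a = π a⁻¹ := by
    intro a
    have p1 : π a * π a⁻¹ = 1 := pi_mul_inv π a
    have s1 : σ a * σ a⁻¹ = 1 := pi_mul_inv σ a
    have h0 : (σ a - π a) * (σ a - π a⁻¹) = 0 := by
      linear_combination p1 - s1 - σ a * (htr a)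
    rcases mul_eq_zero.mp h0 with h' | h'
    · left; linear_combination h'
    · right; linear_combination h'
  by_cases hall : ∀ a, σ a = π a
  · exact Or.inl (MonoidHom.ext hall)
  right
  push_neg at hall
  obtain ⟨b, hb⟩ := hall
  have hb' : σ b = π b⁻¹ := (key b).resolve_left hb
  refine MonoidHom.ext fun a => ?_
  show σ a = π a⁻¹
  by_contra hca
  have ha' : σ a = π a := (key a).resolve_right hca
  rcases key (a * b) with h' | h'
  · rw [map_mul, map_mul, ha', hb'] at h'
    have h2 : π b⁻¹ = π b := mul_left_cancel₀ (pi_ne_zero π a) h'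
    exact hb (hb'.trans h2)
  · rw [map_mul, mul_inv, map_mul, ha', hb'] at h'
    have h2 : π a = π a⁻¹ := mul_right_cancel₀ (pi_ne_zero π b⁻¹) h'
    exact hca (ha'.trans h2)

lemma not_all_scalar {ρ : Dic A y hy →* Matrix (Fin 2) (Fin 2) ℂ}
    (hρ : IsIrredMatRep ρ) :
    ∃ a₀ : A, ¬ ∃ c : ℂ, ρ (ofAHom a₀) = c • 1 := by
  by_contra hall
  push_neg at hall
  obtain ⟨c, hc⟩ := Module.End.exists_eigenvalue (Matrix.mulVecLin (ρ (x A y hy)))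
  obtain ⟨v, hv⟩ := hc.exists_hasEigenvector
  have hv0 : v ≠ 0 := hv.2
  have hxv : (ρ (x A y hy)).mulVec v = c • v := by
    have h1 := hv.apply_eq_smul
    rwa [Matrix.mulVecLin_apply] at h1
  set W : Submodule ℂ (Fin 2 → ℂ) := Submodule.span ℂ {v} with hWdef
  have hvW : v ∈ W := Submodule.mem_span_singleton_self v
  have hWinv : ∀ g : Dic A y hy, ∀ u ∈ W, (ρ g).mulVec u ∈ W := by
    intro g u hu
    rw [hWdef, Submodule.mem_span_singleton] at hu
    obtain ⟨k, rfl⟩ := hu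
    rw [Matrix.mulVec_smul]
    refine W.smul_mem k ?_
    cases hgt : g.t
    · obtain ⟨cg, hcg⟩ := hall g.a
      rw [eq_of_t_false g hgt, hcg, scalar_mulVec]
      exact W.smul_mem _ hvW
    · obtain ⟨cg, hcg⟩ := hall g.a
      rw [eq_of_t_true g hgt, map_mul, ← Matrix.mulVec_mulVec, hcg, scalar_mulVec,
        Matrix.mulVec_smul, hxv]
      exact W.smul_mem _ (W.smul_mem _ hvW)
  rcases hρ W hWinv with h | h
  · rw [h] at hvW
    exact hv0 (by simpa using hvW)
  · have h1 : Module.finrank ℂ W = 1 := finrank_span_singleton hv0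
    rw [h, finrank_top, Module.finrank_fin_fun] at h1
    norm_num at h1

lemma exists_char {ρ : Dic A y hy →* Matrix (Fin 2) (Fin 2) ℂ} (hρ : IsIrredMatRep ρ) :
    ∃ π : A →* ℂ, (∃ a, π a * π a ≠ 1) ∧ MatRepEquiv (Rhom (hy := hy) π) ρ := by
  obtain ⟨a₀, ha₀⟩ := not_all_scalar hρ
  obtain ⟨lam, hlam⟩ := Module.End.exists_eigenvalue (Matrix.mulVecLin (ρ (ofAHom a₀)))
  obtain ⟨v, hv⟩ := hlam.exists_hasEigenvector
  have hv0 : v ≠ 0 := hv.2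
  have hav : (ρ (ofAHom a₀)).mulVec v = lam • v := by
    have h1 := hv.apply_eq_smul
    rwa [Matrix.mulVecLin_apply] at h1
  set E : Submodule ℂ (Fin 2 → ℂ) :=
    LinearMap.ker (Matrix.mulVecLin (ρ (ofAHom a₀)) - lam • LinearMap.id) with hEdef
  have hmemE : ∀ u, u ∈ E ↔ (ρ (ofAHom a₀)).mulVec u = lam • u := by
    intro u
    simp only [hEdef, LinearMap.mem_ker, LinearMap.sub_apply, Matrix.mulVecLin_apply,
      LinearMap.smul_apply, LinearMap.id_apply, sub_eq_zero]
  have hvE : v ∈ E := (hmemE v).mpr hav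
  have hEne : E ≠ ⊥ := by
    intro h
    rw [h] at hvE
    exact hv0 (by simpa using hvE)
  have hEnetop : E ≠ ⊤ := by
    intro h
    refine ha₀ ⟨lam, matrix_ext_of_mulVec fun u => ?_⟩
    rw [scalar_mulVec]
    exact (hmemE u).mp (h ▸ Submodule.mem_top)
  have hErank : Module.finrank ℂ E = 1 := by
    have hlt : Module.finrank ℂ E < 2 := by
      have h2 := Submodule.finrank_lt (K := ℂ) (V := Fin 2 → ℂ) hEnetop
      rwa [Module.finrank_fin_fun] at h2
    have hne0 : Module.finrank ℂ E ≠ 0 := fun h => hEne (Submodule.finrank_eq_zero.mp h)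
    omega
  have hEspan : Submodule.span ℂ {v} = E := by
    apply Submodule.eq_of_le_of_finrank_le (by simpa [Submodule.span_le] using hvE)
    rw [hErank, finrank_span_singleton hv0]
  have hEinv : ∀ a : A, ∀ u ∈ E, (ρ (ofAHom a)).mulVec u ∈ E := by
    intro a u hu
    rw [hmemE] at hu ⊢
    have hcommM : ρ (ofAHom a₀) * ρ (ofAHom a) = ρ (ofAHom a) * ρ (ofAHom a₀) := by
      rw [← map_mul, ofA_comm, map_mul]
    rw [Matrix.mulVec_mulVec, hcommM, ← Matrix.mulVec_mulVec, hu, Matrix.mulVec_smul]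
  have hchar : ∀ a : A, ∃ c : ℂ, (ρ (ofAHom a)).mulVec v = c • v := by
    intro a
    have h1 : (ρ (ofAHom a)).mulVec v ∈ E := hEinv a v hvE
    rw [← hEspan, Submodule.mem_span_singleton] at h1
    obtain ⟨k, hk⟩ := h1
    exact ⟨k, hk.symm⟩
  choose π0 hπ0 using hchar
  have huniq : ∀ (a : A) (c : ℂ), (ρ (ofAHom a)).mulVec v = c • v → π0 a = c := by
    intro a c hc
    have h3 : (π0 a - c) • v = 0 := by rw [sub_smul, ← hπ0 a, ← hc, sub_self]
    rcases smul_eq_zero.mp h3 with h' | h'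
    · exact sub_eq_zero.mp h'
    · exact absurd h' hv0
  set π : A →* ℂ :=
    { toFun := π0
      map_one' := huniq 1 1 (by rw [map_one, map_one, Matrix.one_mulVec, one_smul])
      map_mul' := by
        intro a b
        refine huniq (a * b) (π0 a * π0 b) ?_
        rw [map_mul, map_mul, ← Matrix.mulVec_mulVec, hπ0 b, Matrix.mulVec_smul, hπ0 a,
          smul_smul, mul_comm (π0 b)] } with hπdef
  have hπv : ∀ a : A, (ρ (ofAHom a)).mulVec v = π a • v := hπ0
  have hπuniq : ∀ (a : A) (c : ℂ), (ρ (ofAHom a)).mulVec v = c • v → π a = c := huniq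
  set w : Fin 2 → ℂ := (ρ (x A y hy)).mulVec v with hwdef
  have hπw : ∀ a : A, (ρ (ofAHom a)).mulVec w = π a⁻¹ • w := by
    intro a
    rw [hwdef, Matrix.mulVec_mulVec, ← map_mul, ofA_mul_x, map_mul, ← Matrix.mulVec_mulVec,
      hπv a⁻¹, Matrix.mulVec_smul]
  have hxv : (ρ (x A y hy)).mulVec v = w := rfl
  have hxw : (ρ (x A y hy)).mulVec w = π y • v := by
    rw [hwdef, Matrix.mulVec_mulVec, ← map_mul, x_sq, hπv y]
  set Z : Submodule ℂ (Fin 2 → ℂ) := Submodule.span ℂ {v, w} with hZdef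
  have hvZ : v ∈ Z := Submodule.subset_span (by simp)
  have hwZ : w ∈ Z := Submodule.subset_span (by simp)
  have hZa : ∀ a : A, ∀ u ∈ Z, (ρ (ofAHom a)).mulVec u ∈ Z := by
    intro a u hu
    induction hu using Submodule.span_induction with
    | mem u h =>
      rcases h with h | h
      · rw [h, hπv]; exact Z.smul_mem _ hvZ
      · rw [h, hπw]; exact Z.smul_mem _ hwZ
    | zero => rw [Matrix.mulVec_zero]; exact Z.zero_mem
    | add p q _ _ hp hq => rw [Matrix.mulVec_add]; exact Z.add_mem hp hq
    | smul k p _ hp => rw [Matrix.mulVec_smul]; exact Z.smul_mem k hp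
  have hZx : ∀ u ∈ Z, (ρ (x A y hy)).mulVec u ∈ Z := by
    intro u hu
    induction hu using Submodule.span_induction with
    | mem u h =>
      rcases h with h | h
      · rw [h, hxv]; exact hwZ
      · rw [h, hxw]; exact Z.smul_mem _ hvZ
    | zero => rw [Matrix.mulVec_zero]; exact Z.zero_mem
    | add p q _ _ hp hq => rw [Matrix.mulVec_add]; exact Z.add_mem hp hq
    | smul k p _ hp => rw [Matrix.mulVec_smul]; exact Z.smul_mem k hp
  have hZinv : ∀ g : Dic A y hy, ∀ u ∈ Z, (ρ g).mulVec u ∈ Z := by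
    intro g u hu
    cases hgt : g.t
    · rw [eq_of_t_false g hgt]; exact hZa g.a u hu
    · rw [eq_of_t_true g hgt, map_mul, ← Matrix.mulVec_mulVec]
      exact hZx _ (hZa g.a u hu)
  have hZtop : Z = ⊤ := by
    rcases hρ Z hZinv with h | h
    · rw [h] at hvZ; exact absurd (by simpa using hvZ) hv0
    · exact h
  have hmemZ : ∀ u : Fin 2 → ℂ, ∃ s t : ℂ, s • v + t • w = u := by
    intro u
    have hu : u ∈ Z := hZtop ▸ Submodule.mem_top
    rwa [hZdef, Submodule.mem_span_pair] at hu
  set T : Matrix (Fin 2) (Fin 2) ℂ := Matrix.of fun i j => if j = 0 then v i else w i with hTdef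
  have hTmul : ∀ u : Fin 2 → ℂ, T.mulVec u = u 0 • v + u 1 • w := by
    intro u
    funext i
    simp [hTdef, Matrix.mulVec, dotProduct, Fin.sum_univ_two, mul_comm]
  have hTunit : IsUnit T := by
    rw [← Matrix.mulVec_surjective_iff_isUnit]
    intro b
    obtain ⟨s, t, hst⟩ := hmemZ b
    refine ⟨![s, t], ?_⟩
    rw [hTmul]
    simpa using hst
  refine ⟨π, ⟨a₀, ?_⟩, ⟨T, hTunit, ?_⟩⟩
  · intro hsq
    apply ha₀
    have hpa : π a₀ = lam := hπuniq a₀ lam hav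
    have hπinv : π a₀⁻¹ = π a₀ := by
      have h1 : π a₀ * π a₀⁻¹ = 1 := pi_mul_inv π a₀
      exact mul_left_cancel₀ (pi_ne_zero π a₀) (by rw [h1, hsq])
    refine ⟨lam, matrix_ext_of_mulVec fun u => ?_⟩
    rw [scalar_mulVec]
    obtain ⟨s, t, rfl⟩ := hmemZ u
    rw [Matrix.mulVec_add, Matrix.mulVec_smul, Matrix.mulVec_smul, hπv, hπw, hπinv, hpa,
      smul_add, smul_smul, smul_smul, smul_smul, smul_smul, mul_comm lam s, mul_comm lam t]
  · intro g
    apply matrix_ext_of_mulVec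
    intro u
    rw [← Matrix.mulVec_mulVec, ← Matrix.mulVec_mulVec]
    cases hgt : g.t
    · rw [eq_of_t_false g hgt, Rhom_ofA, mulVec_fin_two _ u, hTmul, hTmul u,
        Matrix.mulVec_add, Matrix.mulVec_smul, Matrix.mulVec_smul, hπv, hπw]
      funext i
      fin_cases i <;> simp <;> ring
    · have hgg : g = x A y hy * ofAHom g.a := eq_of_t_true g hgt
      rw [hgg, x_mul_ofA, Rhom_mk_true, mulVec_fin_two _ u, hTmul,
        ← x_mul_ofA g.a, map_mul, ← Matrix.mulVec_mulVec, hTmul u, Matrix.mulVec_add,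
        Matrix.mulVec_smul, Matrix.mulVec_smul, hπv, hπw, Matrix.mulVec_add,
        Matrix.mulVec_smul, Matrix.mulVec_smul, Matrix.mulVec_smul, Matrix.mulVec_smul,
        hxv, hxw]
      funext i
      fin_cases i <;> simp <;> ring

end Dic

end Part2b
section Part2c

namespace Dic
variable {A : Type*} [CommGroup A] {y : A} {hy : y * y = 1}

/-- characters with `π² ≠ 1`. -/
abbrev Pc (A : Type*) [CommGroup A] := {π : A →* ℂ // ∃ a, π a * π a ≠ 1}

def invol (p : Pc A) : Pc A :=
  ⟨p.1.comp (invMonoidHom : A →* A), by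
    obtain ⟨a, ha⟩ := p.2
    refine ⟨a⁻¹, ?_⟩
    simpa using ha⟩

lemma invol_invol (p : Pc A) : invol (invol p) = p := by
  refine Subtype.ext (MonoidHom.ext fun a => ?_)
  simp [invol]

lemma invol_ne (p : Pc A) : invol p ≠ p := by
  intro h
  obtain ⟨a, ha⟩ := p.2
  apply ha
  have h2 := congrArg (fun q : Pc A => q.1 a) h
  simp only [invol, MonoidHom.comp_apply, invMonoidHom_apply] at h2
  calc p.1 a * p.1 a = p.1 a * p.1 a⁻¹ := by rw [h2]
    _ = 1 := pi_mul_inv _ _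

def relP (p q : Pc A) : Prop := q = p ∨ q = invol p

lemma relP_equivalence : Equivalence (relP (A := A)) := by
  refine ⟨fun p => Or.inl rfl, ?_, ?_⟩
  · rintro p q (rfl | rfl)
    · exact Or.inl rfl
    · exact Or.inr (invol_invol p).symm
  · rintro p q r (rfl | rfl) h
    · exact h
    · rcases h with rfl | rfl
      · exact Or.inr rfl
      · rw [invol_invol]
        exact Or.inl rfl

lemma quot_mk_eq_iff {p q : Pc A} : Quot.mk relP p = Quot.mk relP q ↔ relP p q := by
  rw [Quot.eq]
  exact relP_equivalence.eqvGen_iff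

noncomputable def pcEquiv : Pc A ≃ Quot (relP (A := A)) × Bool where
  toFun p := (Quot.mk _ p, if p = (Quot.mk (relP (A := A)) p).out then true else false)
  invFun q := if q.2 then q.1.out else invol q.1.out
  left_inv p := by
    have hrel : relP ((Quot.mk (relP (A := A)) p).out) p := by
      apply quot_mk_eq_iff.mp
      rw [Quot.out_eq]
    by_cases h : p = (Quot.mk (relP (A := A)) p).out
    · show (if (if p = (Quot.mk (relP (A := A)) p).out then true else false) = true
          then (Quot.mk (relP (A := A)) p).out else invol (Quot.mk (relP (A := A)) p).out) = p
      rw [if_pos h, if_pos rfl]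
      exact h.symm
    · have h2 : p = invol ((Quot.mk (relP (A := A)) p).out) := by
        rcases hrel with h' | h'
        · exact absurd h' h
        · exact h'
      simp only [h, if_false]
      exact h2.symm
  right_inv := by
    rintro ⟨c, b⟩
    cases b
    · have h1 : Quot.mk (relP (A := A)) (invol c.out) = c := by
        have h2 := Quot.sound (r := relP (A := A))
          (show relP c.out (invol c.out) from Or.inr rfl)
        exact h2.symm.trans (Quot.out_eq c)
      show (Quot.mk _ (invol c.out),
        if invol c.out = (Quot.mk (relP (A := A)) (invol c.out)).out then true else false)
          = (c, false)
      refine Prod.ext ?_ ?_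
      · exact h1
      · show (if invol c.out = (Quot.mk (relP (A := A)) (invol c.out)).out then true
            else false) = false
        rw [h1, if_neg (invol_ne _)]
    · show (Quot.mk _ c.out,
        if c.out = (Quot.mk (relP (A := A)) c.out).out then true else false) = (c, true)
      refine Prod.ext ?_ ?_
      · exact Quot.out_eq c
      · show (if c.out = (Quot.mk (relP (A := A)) c.out).out then true else false) = true
        rw [Quot.out_eq c, if_pos rfl]

lemma Req : Equivalence (fun ρ₁ ρ₂ : IrredTwoDimRep (Dic A y hy) => MatRepEquiv ρ₁.1 ρ₂.1) :=
  ⟨fun ρ => MatRepEquiv_refl ρ.1, MatRepEquiv_symm, MatRepEquiv_trans⟩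

noncomputable def Fmap :
    Quot (relP (A := A)) →
      Quot (fun ρ₁ ρ₂ : IrredTwoDimRep (Dic A y hy) => MatRepEquiv ρ₁.1 ρ₂.1) :=
  Quot.lift
    (fun p => Quot.mk _ (⟨Rhom p.1, Rhom_irred p.1 p.2⟩ : IrredTwoDimRep (Dic A y hy)))
    (by
      rintro p q (rfl | rfl)
      · rfl
      · exact Quot.sound (Rhom_equiv_inv p.1))

lemma Fmap_bij :
    Function.Bijective (Fmap (A := A) (y := y) (hy := hy)) := by
  constructor
  · intro q1 q2
    induction q1 using Quot.ind with | _ p =>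
    induction q2 using Quot.ind with | _ q =>
    intro h
    have h2 : MatRepEquiv (Rhom (hy := hy) p.1) (Rhom (hy := hy) q.1) :=
      (Req (hy := hy)).eqvGen_iff.mp (Quot.eq.mp h)
    rcases char_eq h2 with h' | h'
    · exact Quot.sound (Or.inl (Subtype.ext h'))
    · exact Quot.sound (Or.inr (Subtype.ext h'))
  · intro q
    induction q using Quot.ind with | _ ρ =>
    obtain ⟨π, hπ, hequiv⟩ := exists_char ρ.2
    exact ⟨Quot.mk _ ⟨π, hπ⟩, Quot.sound hequiv⟩

lemma card_Pc [Fintype A] (n : ℕ)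
    (hn : Nat.card (A ⧸ (powMonoidHom 2 : A →* A).range) = 2 ^ n) :
    Nat.card (Pc A) = Fintype.card A - 2 ^ n := by
  haveI : NeZero ((Monoid.exponent A : ℂ)) :=
    ⟨Nat.cast_ne_zero.mpr Monoid.exponent_ne_zero_of_finite⟩
  obtain ⟨e⟩ := CommGroup.monoidHom_mulEquiv_of_hasEnoughRootsOfUnity A ℂ
  haveI : Finite (A →* ℂˣ) := Finite.of_equiv A e.toEquiv.symm
  haveI : Finite (A →* ℂ) := Finite.of_equiv _ (homUnitsEquiv A).symm
  haveI := Fintype.ofFinite (A →* ℂ)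
  have e1 : Pc A ≃ {π : A →* ℂ // ¬ ∀ a, π a * π a = 1} :=
    Equiv.subtypeEquivRight (fun π => not_forall.symm)
  rw [Nat.card_congr e1, Nat.card_eq_fintype_card, Fintype.card_subtype_compl]
  have h2 : Fintype.card (A →* ℂ) = Fintype.card A := by
    rw [← Nat.card_eq_fintype_card, ← Nat.card_eq_fintype_card, card_homC]
  have h3 : Fintype.card {π : A →* ℂ // ∀ a, π a * π a = 1} = 2 ^ n := by
    rw [← Nat.card_eq_fintype_card, card_sqOne n hn]
  rw [h2, h3]

lemma card_irredTwoDim [Fintype A] (n : ℕ)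
    (hn : Nat.card (A ⧸ (powMonoidHom 2 : A →* A).range) = 2 ^ n) :
    Nat.card (Quot fun ρ₁ ρ₂ : IrredTwoDimRep (Dic A y hy) => MatRepEquiv ρ₁.1 ρ₂.1) =
      (Fintype.card A - 2 ^ n) / 2 := by
  have hcard : Nat.card (Pc A) = Nat.card (Quot (relP (A := A))) * 2 := by
    rw [Nat.card_congr (pcEquiv (A := A)), Nat.card_prod]
    congr 1
    rw [Nat.card_eq_fintype_card, Fintype.card_bool]
  have h2 : Nat.card (Quot (relP (A := A))) =
      Nat.card (Quot fun ρ₁ ρ₂ : IrredTwoDimRep (Dic A y hy) => MatRepEquiv ρ₁.1 ρ₂.1) :=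
    Nat.card_congr (Equiv.ofBijective _ (Fmap_bij (A := A) (y := y) (hy := hy)))
  rw [card_Pc n hn] at hcard
  omega

end Dic

end Part2c
/-- classification of the irreducible representations of `Dic(A,y)`: writing
`|A/A²| = 2ⁿ`, the group `Dic(A,y)` has exactly `2^(n+1)` one-dimensional complex
representations, exactly `(|A| - 2ⁿ)/2` equivalence classes of irreducible two-dimensional
complex representations, and no irreducible complex representation of dimension at least 3. -/
theorem dic_rep_classification {A : Type*} [CommGroup A] [Fintype A]
    (hA : Even (Fintype.card A)) (hexp : 3 ≤ Monoid.exponent A)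
    (y : A) (hy : y * y = 1) (hy1 : y ≠ 1)
    (n : ℕ) (hn : Nat.card (A ⧸ (powMonoidHom 2 : A →* A).range) = 2 ^ n) :
    Nat.card (Dic A y hy →* ℂ) = 2 ^ (n + 1) ∧
    Nat.card (Quot fun ρ₁ ρ₂ : IrredTwoDimRep (Dic A y hy) => MatRepEquiv ρ₁.1 ρ₂.1) =
      (Fintype.card A - 2 ^ n) / 2 ∧
    ∀ (V : Type) [AddCommGroup V] [Module ℂ V] [FiniteDimensional ℂ V]
      (ρ : Representation ℂ (Dic A y hy) V),
        (∀ W : Submodule ℂ V, (∀ g : Dic A y hy, ∀ v ∈ W, ρ g v ∈ W) → W = ⊥ ∨ W = ⊤) →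
        Module.finrank ℂ V ≤ 2 := by
  refine ⟨Dic.card_dicHom n hn, Dic.card_irredTwoDim n hn, ?_⟩
  intro V _ _ _ ρ hirr
  exact dic_dim_le_two V ρ hirr
end

section
/- Let S ⊆ Dic(A,y) with 1 ∉ S and S⁻¹ = S, written S = S₁ ∪ xS₂ with S₁, S₂ ⊆ A. Then for every positive integer n, S^(n) = ⋃_{k+ℓ=n, k,ℓ≥0} S₁^(k)·(xS₂)^(ℓ). -/
open scoped Classical Pointwise

namespace DicAux

variable {A : Type*} [CommGroup A] {y : A} {hy : y * y = 1}

lemma swap_lemma (g : Dic A y hy) (hg : g.t = true) (c : Dic A y hy) (hc : c.t = false) :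
    g * c = c⁻¹ * c⁻¹ * (c * g) := by
  ext
  · simp [hg, hc]
  · simp [hg, hc, mul_comm, mul_assoc, mul_left_comm]

lemma swap_lemma' (g : Dic A y hy) (hg : g.t = true) (c : Dic A y hy) (hc : c.t = false) :
    g * c = c⁻¹ * g := by
  ext
  · simp [hg, hc]
  · simp [hg, hc, mul_comm]

lemma prod_comm_list (g : Dic A y hy) (hg : g.t = true)
    (L : List (Dic A y hy)) (hL : ∀ c ∈ L, c.t = false) :
    g * L.prod = (L.map Inv.inv).prod * g := by
  induction L with
  | nil => simp
  | cons c t ih =>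
    have hc := hL c (List.mem_cons_self ..)
    have ht : ∀ d ∈ t, d.t = false := fun d hd => hL d (List.mem_cons_of_mem _ hd)
    simp only [List.prod_cons, List.map_cons]
    rw [← mul_assoc, swap_lemma' g hg c hc, mul_assoc, ih ht, mul_assoc]

end DicAux

/-- Lemma 4.2: for `S = S₁ ∪ xS₂ ⊆ Dic(A,y)` with `1 ∉ S` and `S⁻¹ = S`,
for every positive integer `n` one has `S^(n) = ⋃_{k+ℓ=n} S₁^(k)·(xS₂)^(ℓ)`. -/
theorem mulPow_dic_decomposition {A : Type*} [CommGroup A] [Fintype A]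
    (hA : Even (Fintype.card A)) (hexp : 3 ≤ Monoid.exponent A)
    (y : A) (hy : y * y = 1) (hy1 : y ≠ 1)
    (S : Set (Dic A y hy)) (S₁ S₂ : Set A)
    (hS : S = Dic.ofA '' S₁ ∪ (fun a => Dic.x A y hy * Dic.ofA a) '' S₂)
    (h1S : (1 : Dic A y hy) ∉ S) (hSinv : S⁻¹ = S) :
    ∀ n : ℕ, 0 < n →
      mulPow S n =
        ⋃ (k : ℕ) (l : ℕ) (_ : k + l = n),
          mulPow (Dic.ofA '' S₁) k * mulPow ((fun a => Dic.x A y hy * Dic.ofA a) '' S₂) l := by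
  intro n _
  set SA : Set (Dic A y hy) := Dic.ofA '' S₁ with hSA
  set SX : Set (Dic A y hy) := (fun a => Dic.x A y hy * Dic.ofA a) '' S₂ with hSX
  have hSAt : ∀ c ∈ SA, c.t = false := by
    rintro c ⟨a, _, rfl⟩; rfl
  have hSXt : ∀ c ∈ SX, c.t = true := by
    rintro c ⟨a, _, rfl⟩; rfl
  have hSAinv : ∀ c ∈ SA, c⁻¹ ∈ SA := by
    rintro c hc
    have hcS : c ∈ S := hS ▸ Or.inl hc
    have hinvS : c⁻¹ ∈ S := by rw [← hSinv]; exact Set.inv_mem_inv.mpr hcS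
    rw [hS] at hinvS
    rcases hinvS with h | h
    · exact h
    · exfalso
      have := hSXt _ h
      have h2 := hSAt _ hc
      simp [Dic.inv_t, h2] at this
  -- main rearrangement claim
  have key : ∀ L : List (Dic A y hy), (∀ u ∈ L, u ∈ S) →
      ∃ L₁ L₂ : List (Dic A y hy), (∀ u ∈ L₁, u ∈ SA) ∧ (∀ u ∈ L₂, u ∈ SX) ∧
        L₁.length + L₂.length = L.length ∧ L₁.prod * L₂.prod = L.prod := by
    intro L
    induction L with
    | nil => intro _; exact ⟨[], [], by simp, by simp, by simp, by simp⟩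
    | cons h t ih =>
      intro hL
      obtain ⟨L₁, L₂, h₁, h₂, hlen, hprod⟩ :=
        ih (fun u hu => hL u (List.mem_cons_of_mem _ hu))
      have hh : h ∈ S := hL h (List.mem_cons_self ..)
      rw [hS] at hh
      rcases hh with hh | hh
      · refine ⟨h :: L₁, L₂, ?_, h₂, by simp [← hlen]; ring, ?_⟩
        · intro u hu
          rcases List.mem_cons.mp hu with rfl | hu
          · exact hh
          · exact h₁ u hu
        · simp only [List.prod_cons, mul_assoc, hprod]
      · refine ⟨L₁.map Inv.inv, h :: L₂, ?_, ?_, by simp [← hlen]; ring, ?_⟩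
        · intro u hu
          obtain ⟨v, hv, rfl⟩ := List.mem_map.mp hu
          exact hSAinv v (h₁ v hv)
        · intro u hu
          rcases List.mem_cons.mp hu with rfl | hu
          · exact hh
          · exact h₂ u hu
        · have hht : h.t = true := hSXt h hh
          have hL₁t : ∀ c ∈ L₁, c.t = false := fun c hc => hSAt c (h₁ c hc)
          simp only [List.prod_cons, ← mul_assoc,
            ← DicAux.prod_comm_list h hht L₁ hL₁t]
          rw [mul_assoc, hprod]
  ext g
  constructor
  · rintro ⟨L, hlen, hmem, hprodL⟩
    obtain ⟨L₁, L₂, h₁, h₂, hlen', hprod⟩ := key L hmem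
    refine Set.mem_iUnion.mpr ⟨L₁.length, Set.mem_iUnion.mpr ⟨L₂.length,
      Set.mem_iUnion.mpr ⟨by rw [hlen', hlen], ?_⟩⟩⟩
    rw [← hprodL, ← hprod]
    exact Set.mul_mem_mul ⟨L₁, rfl, h₁, rfl⟩ ⟨L₂, rfl, h₂, rfl⟩
  · intro hg
    obtain ⟨k, hk⟩ := Set.mem_iUnion.mp hg
    obtain ⟨l, hl⟩ := Set.mem_iUnion.mp hk
    obtain ⟨hkl, hmem⟩ := Set.mem_iUnion.mp hl
    obtain ⟨p, hp, q, hq, rfl⟩ := hmem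
    obtain ⟨L₁, hlen₁, hmem₁, rfl⟩ := hp
    obtain ⟨L₂, hlen₂, hmem₂, rfl⟩ := hq
    refine ⟨L₁ ++ L₂, by simp [hlen₁, hlen₂, hkl], ?_, by simp⟩
    intro u hu
    rcases List.mem_append.mp hu with hu | hu
    · exact hS ▸ Or.inl (hmem₁ u hu)
    · exact hS ▸ Or.inr (hmem₂ u hu)
end
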